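/- arXiv:2603.17858 — 4 statements merged into one kernel-verified Lean document; each statement's English description precedes it below -/
import Mathlib

section
/- Let G = (V,E) be a finite graph, let v be a vertex of G and let (λ_u)_{u∈V} be a vector of variables. Then there exists a vector of variables (λ̃_w)_{w ∈ V(T_SAW(G,v))} with λ̃_w ∈ {λ_u : u ∈ V} for each vertex w of T_SAW(G,v), such that R_{T_SAW(G,v),v}(λ̃) = R_{G,v}(λ⃗). Moreover, for any vertex u of T_SAW(G,v), the subtree of T_SAW(G,v) consisting of those vertices w such that u lies on the unique path from w to v, rooted at u, is the self-avoiding-walk tree of an induced subgraph of G. -/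
open scoped Classical

noncomputable section

structure HCGraph (V : Type) where
  verts : Finset V
  adj : V → V → Bool

namespace HCGraph

variable {V : Type} {K : Type} [Field K]

/-- The simple graph underlying a `HCGraph`: adjacency restricted to the vertex set,
symmetrized and with loops removed. -/
def toSG (G : HCGraph V) : SimpleGraph V where
  Adj u v := u ≠ v ∧ u ∈ G.verts ∧ v ∈ G.verts ∧ (G.adj u v = true ∨ G.adj v u = true)
  symm := by
    refine ⟨?_⟩
    intro u v h
    exact ⟨h.1.symm, h.2.2.1, h.2.1, h.2.2.2.symm⟩
  loopless := by
    refine ⟨?_⟩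
    intro v h
    exact h.1 rfl

/-- A `HCGraph` is simple if its adjacency function is symmetric and irreflexive. -/
def IsSimple (G : HCGraph V) : Prop :=
  (∀ u v, G.adj u v = G.adj v u) ∧ ∀ v, G.adj v v = false

/-- `I` is an independent set of `G`. -/
def IsInd (G : HCGraph V) (I : Finset V) : Prop :=
  I ⊆ G.verts ∧ ∀ u ∈ I, ∀ w ∈ I, G.adj u w = false

/-- The collection of independent sets of `G`. -/
def indepSets (G : HCGraph V) : Finset (Finset V) :=
  G.verts.powerset.filter fun I => ∀ u ∈ I, ∀ w ∈ I, G.adj u w = false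

/-- The independence polynomial (partition function of the hard-core model). -/
def Z (G : HCGraph V) (x : K) : K := ∑ I ∈ G.indepSets, x ^ I.card

/-- Partition function restricted to independent sets containing `v`. -/
def Zin (G : HCGraph V) (v : V) (x : K) : K :=
  ∑ I ∈ G.indepSets.filter (fun I => v ∈ I), x ^ I.card

/-- Partition function restricted to independent sets avoiding `v`. -/
def Zout (G : HCGraph V) (v : V) (x : K) : K :=
  ∑ I ∈ G.indepSets.filter (fun I => v ∉ I), x ^ I.card

/-- The occupation ratio at `v`. -/
def ratio (G : HCGraph V) (v : V) (x : K) : K := G.Zin v x / G.Zout v x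

/-- Multivariate independence polynomial. -/
def Zm (G : HCGraph V) (x : V → K) : K := ∑ I ∈ G.indepSets, ∏ u ∈ I, x u

def Zmin (G : HCGraph V) (v : V) (x : V → K) : K :=
  ∑ I ∈ G.indepSets.filter (fun I => v ∈ I), ∏ u ∈ I, x u

def Zmout (G : HCGraph V) (v : V) (x : V → K) : K :=
  ∑ I ∈ G.indepSets.filter (fun I => v ∉ I), ∏ u ∈ I, x u

/-- Multivariate occupation ratio at `v`. -/
def ratioM (G : HCGraph V) (v : V) (x : V → K) : K := G.Zmin v x / G.Zmout v x

/-- The set of vertices at graph distance `ℓ` from `v`. -/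
def sphere (G : HCGraph V) (v : V) (ℓ : ℕ) : Finset V :=
  G.verts.filter fun u => G.toSG.Reachable v u ∧ G.toSG.dist v u = ℓ

/-- The neighbours of `v` in `G`. -/
def nbr (G : HCGraph V) (v : V) : Finset V := G.verts.filter fun u => G.toSG.Adj v u

/-- `G` has maximum degree at most `Δ`. -/
def maxDegLE (G : HCGraph V) (Δ : ℕ) : Prop := ∀ v, (G.nbr v).card ≤ Δ

variable [DecidableEq V]

/-- The induced subgraph of `G` on `S`. -/
def induce (G : HCGraph V) (S : Finset V) : HCGraph V := ⟨G.verts ∩ S, G.adj⟩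

/-- Delete the vertex `v` from `G`. -/
def eraseVert (G : HCGraph V) (v : V) : HCGraph V := ⟨G.verts.erase v, G.adj⟩

/-- The collection of independent sets compatible with the boundary condition `σ`
     on `D` (the sets do not use vertices of `D` and together with the vertices of `D`
     that `σ` puts "in" they are independent). -/
def condSets (G : HCGraph V) (D : Finset V) (σ : V → Bool) : Finset (Finset V) :=
  (G.verts \ D).powerset.filter fun I => G.IsInd (I ∪ D.filter fun w => σ w = true)

def ZinBC (G : HCGraph V) (D : Finset V) (σ : V → Bool) (v : V) (x : K) : K :=
  ∑ I ∈ (G.condSets D σ).filter (fun I => v ∈ I), x ^ I.card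

def ZoutBC (G : HCGraph V) (D : Finset V) (σ : V → Bool) (v : V) (x : K) : K :=
  ∑ I ∈ (G.condSets D σ).filter (fun I => v ∉ I), x ^ I.card

/-- The occupation ratio at `v` conditioned on the boundary condition `σ` on `D`. -/
def ratioBC (G : HCGraph V) (D : Finset V) (σ : V → Bool) (v : V) (x : K) : K :=
  G.ZinBC D σ v x / G.ZoutBC D σ v x

/-- `σ` is a valid boundary condition on `D ⊆ V(G)`: the vertices declared "in" form an
independent set. -/
def ValidBC (G : HCGraph V) (D : Finset V) (σ : V → Bool) : Prop :=
  D ⊆ G.verts ∧ G.IsInd (D.filter fun w => σ w = true)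

end HCGraph

/-- Sorted list of neighbours of `v` (fixed total order on `ℕ`). -/
def nbrList (G : HCGraph ℕ) (v : ℕ) : List ℕ := (G.nbr v).sort (· ≤ ·)

/-- Fueled construction of the tree of self-avoiding walks.  The vertices of the tree are
reversed walks in `G`; the root of `TSAWAux n G v` is `[v]`, and the subtree hanging from
the `i`-th neighbour `vᵢ` of `v` is the self-avoiding walk tree of `G - {v, v₁, …, vᵢ₋₁}`
rooted at `vᵢ`, with `v` appended to each of its vertex labels. -/
def TSAWAux : ℕ → HCGraph ℕ → ℕ → HCGraph (List ℕ)
  | 0, _, v => ⟨{[v]}, fun _ _ => false⟩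
  | n+1, G, v =>
    let nbrs := nbrList G v
    let trees : List (HCGraph (List ℕ)) :=
      (List.range nbrs.length).map fun i =>
        TSAWAux n ((nbrs.take i).foldl HCGraph.eraseVert (G.eraseVert v)) (nbrs.getD i 0)
    ⟨trees.foldr (fun T acc => T.verts.image (fun w => w ++ [v]) ∪ acc) {[v]},
     fun x y =>
       (decide (x = [v]) && nbrs.any fun u => decide (y = [u, v])) ||
       (decide (y = [v]) && nbrs.any fun u => decide (x = [u, v])) ||
       (trees.any fun T =>
         decide (x.dropLast ∈ T.verts) && decide (y.dropLast ∈ T.verts) &&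
           T.adj x.dropLast y.dropLast)⟩

/-- The tree of self-avoiding walks of `G` starting at `v`; its root is the vertex `[v]`. -/
def TSAW (G : HCGraph ℕ) (v : ℕ) : HCGraph (List ℕ) := TSAWAux G.verts.card G v

/-- Very strong spatial mixing with constant `C` and rate `α` for the hard-core model at
fugacity `lam` on the family `𝒢`. -/
def VSSMwith (𝒢 : Set (HCGraph ℕ)) (lam C α : ℝ) : Prop :=
  ∀ G ∈ 𝒢, ∀ S : Finset ℕ, ∀ v ∈ (G.induce S).verts, ∀ ℓ : ℕ, 0 < ℓ →
    ∀ σ τ : List ℕ → Bool,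
      (TSAW (G.induce S) v).ValidBC ((TSAW (G.induce S) v).sphere [v] ℓ) σ →
      (TSAW (G.induce S) v).ValidBC ((TSAW (G.induce S) v).sphere [v] ℓ) τ →
      |(TSAW (G.induce S) v).ratioBC ((TSAW (G.induce S) v).sphere [v] ℓ) σ [v] lam -
        (TSAW (G.induce S) v).ratioBC ((TSAW (G.induce S) v).sphere [v] ℓ) τ [v] lam|
        ≤ C * α ^ ℓ

/-- Very strong spatial mixing for the hard-core model at fugacity `lam` on `𝒢`. -/
def VSSM (𝒢 : Set (HCGraph ℕ)) (lam : ℝ) : Prop :=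
  ∃ C : ℝ, 0 < C ∧ ∃ α : ℝ, 0 ≤ α ∧ α < 1 ∧ VSSMwith 𝒢 lam C α

end

noncomputable section

/-- The field of multivariate rational functions over `ℂ` in variables indexed by `ℕ`. -/
abbrev RatField : Type := FractionRing (MvPolynomial ℕ ℂ)

/-- The variable `λ_u` as an element of the field of rational functions. -/
def Xvar (u : ℕ) : RatField :=
  algebraMap (MvPolynomial ℕ ℂ) RatField (MvPolynomial.X u)

/-- The subtree of a tree `T` rooted at `root` hanging below the vertex `u`: it consists of
the vertices `w` such that `u` lies on the (unique) path from `w` to `root`. -/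
def subtreeAt {V : Type} (T : HCGraph V) (root u : V) : HCGraph V :=
  ⟨T.verts.filter
      (fun w => T.toSG.Reachable w u ∧
        T.toSG.dist w root = T.toSG.dist w u + T.toSG.dist u root),
    T.adj⟩

/-- An isomorphism of rooted graphs: a bijection between the vertex sets mapping root to
root and preserving adjacency. -/
def RootedIso {α β : Type} (G : HCGraph α) (a : α) (H : HCGraph β) (b : β) : Prop :=
  ∃ f : α → β, f a = b ∧ Set.BijOn f ↑G.verts ↑H.verts ∧
    ∀ x ∈ G.verts, ∀ y ∈ G.verts, (G.toSG.Adj x y ↔ H.toSG.Adj (f x) (f y))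


-- ===================== Auxiliary development =====================
section AuxDev
open Finset

namespace HCGraph

variable {α : Type} [DecidableEq α] {K : Type} [Field K]

lemma mem_indepSets {G : HCGraph α} {I : Finset α} :
    I ∈ G.indepSets ↔ I ⊆ G.verts ∧ ∀ u ∈ I, ∀ w ∈ I, G.adj u w = false := by
  simp [indepSets, Finset.mem_filter, Finset.mem_powerset]

lemma empty_mem_indepSets (G : HCGraph α) : (∅ : Finset α) ∈ G.indepSets := by
  simp [mem_indepSets]

lemma Zm_congr {G : HCGraph α} {x y : α → K} (h : ∀ u ∈ G.verts, x u = y u) :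
    G.Zm x = G.Zm y := by
  refine Finset.sum_congr rfl fun I hI => Finset.prod_congr rfl fun u hu => ?_
  exact h u ((mem_indepSets.1 hI).1 hu)

lemma Zm_eq_Zmin_add_Zmout (G : HCGraph α) (r : α) (x : α → K) :
    G.Zm x = G.Zmin r x + G.Zmout r x := by
  rw [Zm, Zmin, Zmout, Finset.sum_filter_add_sum_filter_not]

lemma Zmout_eq (G : HCGraph α) (r : α) (x : α → K) :
    G.Zmout r x = (G.eraseVert r).Zm x := by
  rw [Zmout, Zm]
  apply Finset.sum_congr _ (fun I _ => rfl)
  ext I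
  simp only [Finset.mem_filter, mem_indepSets, eraseVert, Finset.subset_erase]
  tauto

/-- Vertices adjacent (in the raw sense) to `r`. -/
def rawNbr (G : HCGraph α) (r : α) : Finset α :=
  G.verts.filter fun u => G.adj r u || G.adj u r

lemma Zmin_eq (G : HCGraph α) (r : α) (x : α → K) (hr : r ∈ G.verts)
    (hrr : G.adj r r = false) :
    G.Zmin r x = x r * Zm ⟨(G.verts.erase r) \ G.rawNbr r, G.adj⟩ x := by
  rw [Zmin, Zm, Finset.mul_sum]
  refine Finset.sum_nbij' (fun I => I.erase r) (fun J => insert r J) ?_ ?_ ?_ ?_ ?_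
  · intro I hI
    simp only [Finset.mem_filter, mem_indepSets] at hI ⊢
    obtain ⟨⟨hsub, hind⟩, hrI⟩ := hI
    refine ⟨?_, fun u hu => fun w hw => hind u (Finset.mem_of_mem_erase hu) w
      (Finset.mem_of_mem_erase hw)⟩
    intro u hu
    have hu' := Finset.mem_of_mem_erase hu
    have hne := Finset.ne_of_mem_erase hu
    simp only [Finset.mem_sdiff, Finset.mem_erase, rawNbr, Finset.mem_filter]
    refine ⟨⟨hne, hsub hu'⟩, ?_⟩
    rintro ⟨-, hadj⟩
    rcases Bool.or_eq_true_iff.1 hadj with h | h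
    · rw [hind r hrI u hu'] at h; exact Bool.false_ne_true h
    · rw [hind u hu' r hrI] at h; exact Bool.false_ne_true h
  · intro J hJ
    simp only [mem_indepSets] at hJ
    obtain ⟨hsub, hind⟩ := hJ
    have hJr : r ∉ J := by
      intro h
      have := hsub h
      simp only [Finset.mem_sdiff, Finset.mem_erase] at this
      exact this.1.1 rfl
    simp only [Finset.mem_filter, mem_indepSets]
    have hJverts : ∀ u ∈ J, u ∈ G.verts ∧ u ∉ G.rawNbr r := by
      intro u hu
      have := hsub hu
      simp only [Finset.mem_sdiff, Finset.mem_erase] at this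
      exact ⟨this.1.2, this.2⟩
    refine ⟨⟨?_, ?_⟩, Finset.mem_insert_self r J⟩
    · intro u hu
      rcases Finset.mem_insert.1 hu with rfl | hu
      · exact hr
      · exact (hJverts u hu).1
    · intro u hu w hw
      have key : ∀ a ∈ J, G.adj r a = false ∧ G.adj a r = false := by
        intro a ha
        have h1 := (hJverts a ha).1
        have h2 := (hJverts a ha).2
        simp only [rawNbr, Finset.mem_filter, h1, true_and, Bool.or_eq_true_iff,
          not_or] at h2
        exact ⟨Bool.eq_false_iff.2 h2.1, Bool.eq_false_iff.2 h2.2⟩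
      rcases Finset.mem_insert.1 hu with hu' | hu' <;>
        rcases Finset.mem_insert.1 hw with hw' | hw'
      · rw [hu', hw']; exact hrr
      · rw [hu']; exact (key w hw').1
      · rw [hw']; exact (key u hu').2
      · exact hind u hu' w hw' 
  · intro I hI
    simp only [Finset.mem_filter] at hI
    exact Finset.insert_erase hI.2
  · intro J hJ
    have hJr : r ∉ J := by
      intro h
      have := (mem_indepSets.1 hJ).1 h
      simp only [Finset.mem_sdiff, Finset.mem_erase] at this
      exact this.1.1 rfl
    exact Finset.erase_insert hJr
  · intro I hI
    simp only [Finset.mem_filter] at hI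
    exact (Finset.mul_prod_erase I x hI.2).symm

lemma Zm_union {A B : Finset α} (f : α → α → Bool) (x : α → K)
    (hd : ∀ a ∈ A, ∀ b ∈ B, a ≠ b ∧ f a b = false ∧ f b a = false) :
    Zm ⟨A ∪ B, f⟩ x = Zm (⟨A, f⟩ : HCGraph α) x * Zm (⟨B, f⟩ : HCGraph α) x := by
  have hAB : Disjoint A B := by
    rw [Finset.disjoint_left]
    intro a ha hb
    exact (hd a ha a hb).1 rfl
  rw [Zm, Zm, Zm, Finset.sum_mul_sum, ← Finset.sum_product']
  refine Finset.sum_nbij' (fun I => (I ∩ A, I ∩ B)) (fun p => p.1 ∪ p.2) ?_ ?_ ?_ ?_ ?_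
  · intro I hI
    simp only [mem_indepSets] at hI
    obtain ⟨hsub, hind⟩ := hI
    simp only [Finset.mem_product, mem_indepSets]
    exact ⟨⟨Finset.inter_subset_right, fun u hu w hw =>
        hind u (Finset.mem_of_mem_inter_left hu) w (Finset.mem_of_mem_inter_left hw)⟩,
      ⟨Finset.inter_subset_right, fun u hu w hw =>
        hind u (Finset.mem_of_mem_inter_left hu) w (Finset.mem_of_mem_inter_left hw)⟩⟩
  · intro p hp
    simp only [Finset.mem_product, mem_indepSets] at hp
    obtain ⟨⟨h1, h1i⟩, ⟨h2, h2i⟩⟩ := hp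
    simp only [mem_indepSets]
    constructor
    · exact Finset.union_subset_union h1 h2
    · intro u hu w hw
      rcases Finset.mem_union.1 hu with hu | hu <;> rcases Finset.mem_union.1 hw with hw | hw
      · exact h1i u hu w hw
      · exact (hd u (h1 hu) w (h2 hw)).2.1
      · exact (hd w (h1 hw) u (h2 hu)).2.2
      · exact h2i u hu w hw
  · intro I hI
    have hsub := (mem_indepSets.1 hI).1
    show (I ∩ A) ∪ (I ∩ B) = I
    ext a
    simp only [Finset.mem_union, Finset.mem_inter]
    constructor
    · rintro (⟨h, -⟩ | ⟨h, -⟩) <;> exact h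
    · intro h
      rcases Finset.mem_union.1 (hsub h) with hA | hB
      · exact Or.inl ⟨h, hA⟩
      · exact Or.inr ⟨h, hB⟩
  · intro p hp
    simp only [Finset.mem_product, mem_indepSets] at hp
    obtain ⟨⟨h1, -⟩, ⟨h2, -⟩⟩ := hp
    have e1 : (p.1 ∪ p.2) ∩ A = p.1 := by
      ext a
      simp only [Finset.mem_inter, Finset.mem_union]
      constructor
      · rintro ⟨h | h, hA⟩
        · exact h
        · exact absurd hA (Finset.disjoint_right.1 hAB (h2 h))
      · intro h; exact ⟨Or.inl h, h1 h⟩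
    have e2 : (p.1 ∪ p.2) ∩ B = p.2 := by
      ext a
      simp only [Finset.mem_inter, Finset.mem_union]
      constructor
      · rintro ⟨h | h, hB⟩
        · exact absurd hB (Finset.disjoint_left.1 hAB (h1 h))
        · exact h
      · intro h; exact ⟨Or.inr h, h2 h⟩
    show ((p.1 ∪ p.2) ∩ A, (p.1 ∪ p.2) ∩ B) = p
    rw [e1, e2]
  · intro I hI
    have hsub := (mem_indepSets.1 hI).1
    have hIeq : I = (I ∩ A) ∪ (I ∩ B) := by
      ext a
      simp only [Finset.mem_union, Finset.mem_inter]
      constructor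
      · intro h
        rcases Finset.mem_union.1 (hsub h) with hA | hB
        · exact Or.inl ⟨h, hA⟩
        · exact Or.inr ⟨h, hB⟩
      · rintro (⟨h, -⟩ | ⟨h, -⟩) <;> exact h
    show ∏ u ∈ I, x u = (∏ u ∈ I ∩ A, x u) * ∏ u ∈ I ∩ B, x u
    rw [← Finset.prod_union (Finset.disjoint_of_subset_left Finset.inter_subset_right
      (Finset.disjoint_of_subset_right Finset.inter_subset_right hAB)), ← hIeq]

lemma mem_foldr_union {Ps : List (Finset α)} {a : α} :
    a ∈ Ps.foldr (· ∪ ·) ∅ ↔ ∃ P ∈ Ps, a ∈ P := by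
  induction Ps with
  | nil => simp
  | cons P Ps ih => simp [ih]

lemma Zm_empty (f : α → α → Bool) (x : α → K) : Zm ⟨(∅ : Finset α), f⟩ x = 1 := by
  have : indepSets ⟨(∅ : Finset α), f⟩ = {∅} := by
    ext I
    simp [mem_indepSets, Finset.subset_empty]
    intro h; subst h; simp
  rw [Zm, this]
  simp

lemma Zm_foldr_union (f : α → α → Bool) (x : α → K) (Ps : List (Finset α))
    (hP : Ps.Pairwise fun P Q => ∀ a ∈ P, ∀ b ∈ Q, a ≠ b ∧ f a b = false ∧ f b a = false) :
    Zm ⟨Ps.foldr (· ∪ ·) ∅, f⟩ x = (Ps.map fun P => Zm (⟨P, f⟩ : HCGraph α) x).prod := by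
  induction Ps with
  | nil => simpa using Zm_empty f x
  | cons P Ps ih =>
    rw [List.pairwise_cons] at hP
    have := Zm_union (A := P) (B := Ps.foldr (· ∪ ·) ∅) f x ?_
    · simpa [this] using congrArg (Zm (⟨P, f⟩ : HCGraph α) x * ·) (ih hP.2)
    · intro a ha b hb
      obtain ⟨Q, hQ, hbQ⟩ := mem_foldr_union.1 hb
      exact hP.1 Q hQ a ha b hbQ

lemma Zm_image {A : Finset α} {g : α → α} {f f' : α → α → Bool} (x : α → K)
    (hinj : Set.InjOn g A) (hadj : ∀ a ∈ A, ∀ b ∈ A, f' (g a) (g b) = f a b) :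
    Zm ⟨A.image g, f'⟩ x = Zm (⟨A, f⟩ : HCGraph α) (fun a => x (g a)) := by
  have hleft : ∀ J ∈ indepSets ⟨A.image g, f'⟩,
      (A.filter (fun a => g a ∈ J)).image g = J := by
    intro J hJ
    have hsub := (mem_indepSets.1 hJ).1
    ext b
    simp only [Finset.mem_image, Finset.mem_filter]
    constructor
    · rintro ⟨a, ⟨-, h⟩, rfl⟩; exact h
    · intro hb
      obtain ⟨a, ha, rfl⟩ := Finset.mem_image.1 (hsub hb)
      exact ⟨a, ⟨ha, hb⟩, rfl⟩
  rw [Zm, Zm]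
  refine Finset.sum_nbij' (fun J => A.filter (fun a => g a ∈ J)) (fun I => I.image g)
    ?_ ?_ ?_ ?_ ?_
  · intro J hJ
    obtain ⟨hsub, hind⟩ := mem_indepSets.1 hJ
    refine mem_indepSets.2 ⟨Finset.filter_subset _ _, ?_⟩
    intro a ha b hb
    have ha' := Finset.mem_filter.1 ha
    have hb' := Finset.mem_filter.1 hb
    show f a b = false
    rw [← hadj a ha'.1 b hb'.1]
    exact hind _ ha'.2 _ hb'.2
  · intro I hI
    obtain ⟨hsub, hind⟩ := mem_indepSets.1 hI
    refine mem_indepSets.2 ⟨Finset.image_subset_image hsub, ?_⟩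
    intro u hu w hw
    obtain ⟨a, ha, rfl⟩ := Finset.mem_image.1 hu
    obtain ⟨b, hb, rfl⟩ := Finset.mem_image.1 hw
    show f' (g a) (g b) = false
    rw [hadj a (hsub ha) b (hsub hb)]
    exact hind a ha b hb
  · exact hleft
  · intro I hI
    have hsub := (mem_indepSets.1 hI).1
    ext a
    simp only [Finset.mem_filter, Finset.mem_image]
    constructor
    · rintro ⟨ha, b, hb, hba⟩
      rwa [hinj (hsub hb) ha hba] at hb
    · intro ha
      exact ⟨hsub ha, a, ha, rfl⟩
  · intro J hJ
    conv_lhs => rw [← hleft J hJ]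
    refine Finset.prod_image ?_
    intro a ha b hb hab
    exact hinj (Finset.filter_subset _ _ ha) (Finset.filter_subset _ _ hb) hab


lemma Zm_comp_ne_zero (G : HCGraph α) (h : α → ℕ) :
    G.Zm (fun u => Xvar (h u)) ≠ 0 := by
  have key : G.Zm (fun u => Xvar (h u)) =
      algebraMap (MvPolynomial ℕ ℂ) RatField
        (∑ I ∈ G.indepSets, ∏ u ∈ I, MvPolynomial.X (h u)) := by
    rw [Zm, map_sum]
    exact Finset.sum_congr rfl fun I _ => (map_prod _ _ _).symm
  rw [key]
  intro hc
  have hP : (∑ I ∈ G.indepSets, ∏ u ∈ I, MvPolynomial.X (h u) : MvPolynomial ℕ ℂ) = 0 :=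
    IsFractionRing.injective (MvPolynomial ℕ ℂ) RatField (by rw [hc, map_zero])
  have hcc := congrArg MvPolynomial.constantCoeff hP
  rw [map_sum, map_zero] at hcc
  have h1 : ∀ I ∈ G.indepSets,
      MvPolynomial.constantCoeff (∏ u ∈ I, MvPolynomial.X (h u) : MvPolynomial ℕ ℂ)
        = (0:ℂ) ^ I.card := by
    intro I _
    rw [map_prod]
    simp [MvPolynomial.constantCoeff_X, Finset.prod_const]
  rw [Finset.sum_congr rfl h1, Finset.sum_eq_single_of_mem ∅ G.empty_mem_indepSets ?_]
    at hcc
  · simp at hcc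
  · intro I _ hI
    exact zero_pow (by simpa [Finset.card_eq_zero] using hI)

lemma prod_range_div_telescope {f : ℕ → K} (hf : ∀ i, f i ≠ 0) (n : ℕ) :
    ∏ i ∈ Finset.range n, f (i+1) / f i = f n / f 0 := by
  induction n with
  | zero => simp [div_self (hf 0)]
  | succ n ih =>
    rw [Finset.prod_range_succ, ih]
    calc f n / f 0 * (f (n+1) / f n) = f (n+1) / f 0 * (f n / f n) := by ring
      _ = f (n+1) / f 0 := by rw [div_self (hf n), mul_one]

end HCGraph

lemma HCGraph.ext' {α : Type} {G H : HCGraph α} (h1 : G.verts = H.verts)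
    (h2 : G.adj = H.adj) : G = H := by
  cases G; cases H; cases h1; cases h2; rfl

lemma list_map_range_prod {K : Type} [Field K] (f : ℕ → K) (n : ℕ) :
    ((List.range n).map f).prod = ∏ i ∈ Finset.range n, f i := by
  induction n with
  | zero => simp
  | succ n ih => rw [List.range_succ, List.map_append, List.prod_append,
      Finset.prod_range_succ, ih]; simp

section Structural

open HCGraph

/-- The graph `G - {v, v₁, …, vᵢ₋₁}`. -/
def subG (G : HCGraph ℕ) (v : ℕ) (i : ℕ) : HCGraph ℕ :=
  ((nbrList G v).take i).foldl HCGraph.eraseVert (G.eraseVert v)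

/-- The `i`-th subtree of the self-avoiding walk tree. -/
def subT (n : ℕ) (G : HCGraph ℕ) (v : ℕ) (i : ℕ) : HCGraph (List ℕ) :=
  TSAWAux n (subG G v i) ((nbrList G v).getD i 0)

def treesOf (n : ℕ) (G : HCGraph ℕ) (v : ℕ) : List (HCGraph (List ℕ)) :=
  (List.range (nbrList G v).length).map (subT n G v)

lemma TSAWAux_succ (n : ℕ) (G : HCGraph ℕ) (v : ℕ) :
    TSAWAux (n+1) G v =
      ⟨(treesOf n G v).foldr (fun T acc => T.verts.image (fun w => w ++ [v]) ∪ acc) {[v]},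
       fun x y =>
         (decide (x = [v]) && (nbrList G v).any fun u => decide (y = [u, v])) ||
         (decide (y = [v]) && (nbrList G v).any fun u => decide (x = [u, v])) ||
         ((treesOf n G v).any fun T =>
           decide (x.dropLast ∈ T.verts) && decide (y.dropLast ∈ T.verts) &&
             T.adj x.dropLast y.dropLast)⟩ := rfl

lemma mem_vertsJoin {Ts : List (HCGraph (List ℕ))} {v : ℕ} {x : List ℕ} :
    x ∈ Ts.foldr (fun T acc => T.verts.image (fun w => w ++ [v]) ∪ acc) {[v]} ↔
      x = [v] ∨ ∃ T ∈ Ts, ∃ a ∈ T.verts, x = a ++ [v] := by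
  induction Ts with
  | nil => simp
  | cons T Ts ih =>
    simp only [List.foldr_cons, Finset.mem_union, ih, Finset.mem_image, List.mem_cons]
    constructor
    · rintro (⟨a, ha, rfl⟩ | h | ⟨T', hT', a, ha, rfl⟩)
      · exact Or.inr ⟨T, Or.inl rfl, a, ha, rfl⟩
      · exact Or.inl h
      · exact Or.inr ⟨T', Or.inr hT', a, ha, rfl⟩
    · rintro (h | ⟨T', hT' | hT', a, ha, rfl⟩)
      · exact Or.inr (Or.inl h)
      · exact Or.inl ⟨a, by rw [hT'] at ha; exact ha, rfl⟩
      · exact Or.inr (Or.inr ⟨T', hT', a, ha, rfl⟩)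

lemma mem_TSAWAux_succ {n : ℕ} {G : HCGraph ℕ} {v : ℕ} {x : List ℕ} :
    x ∈ (TSAWAux (n+1) G v).verts ↔
      x = [v] ∨ ∃ T ∈ treesOf n G v, ∃ a ∈ T.verts, x = a ++ [v] := by
  rw [TSAWAux_succ]; exact mem_vertsJoin

lemma mem_treesOf {n : ℕ} {G : HCGraph ℕ} {v : ℕ} {T : HCGraph (List ℕ)} :
    T ∈ treesOf n G v ↔ ∃ i < (nbrList G v).length, T = subT n G v i := by
  simp only [treesOf, List.mem_map, List.mem_range]
  constructor
  · rintro ⟨i, hi, rfl⟩; exact ⟨i, hi, rfl⟩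
  · rintro ⟨i, hi, rfl⟩; exact ⟨i, hi, rfl⟩

lemma TSAWAux_adj_iff {n : ℕ} {G : HCGraph ℕ} {v : ℕ} {x y : List ℕ} :
    (TSAWAux (n+1) G v).adj x y = true ↔
      (x = [v] ∧ ∃ u ∈ nbrList G v, y = [u, v]) ∨
      (y = [v] ∧ ∃ u ∈ nbrList G v, x = [u, v]) ∨
      (∃ T ∈ treesOf n G v, x.dropLast ∈ T.verts ∧ y.dropLast ∈ T.verts ∧
        T.adj x.dropLast y.dropLast = true) := by
  rw [TSAWAux_succ]
  simp only [Bool.or_eq_true, Bool.and_eq_true, List.any_eq_true, decide_eq_true_eq,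
    or_assoc, and_assoc]

lemma mem_nbrList {G : HCGraph ℕ} {v u : ℕ} :
    u ∈ nbrList G v ↔ u ∈ G.verts ∧ G.toSG.Adj v u := by
  rw [nbrList, Finset.mem_sort, nbr, Finset.mem_filter]

lemma nbrList_nodup (G : HCGraph ℕ) (v : ℕ) : (nbrList G v).Nodup :=
  Finset.sort_nodup _ _

lemma mem_nbrList_ne {G : HCGraph ℕ} {v u : ℕ} (h : u ∈ nbrList G v) : u ≠ v :=
  fun he => (mem_nbrList.1 h).2.ne' (by rw [he])

lemma foldl_erase_adj (l : List ℕ) (H : HCGraph ℕ) :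
    (l.foldl HCGraph.eraseVert H).adj = H.adj := by
  induction l generalizing H with
  | nil => rfl
  | cons a l ih => exact ih (H.eraseVert a)

lemma foldl_erase_verts (l : List ℕ) (H : HCGraph ℕ) (x : ℕ) :
    x ∈ (l.foldl HCGraph.eraseVert H).verts ↔ x ∈ H.verts ∧ x ∉ l := by
  induction l generalizing H with
  | nil => simp
  | cons a l ih =>
    rw [List.foldl_cons, ih]
    simp only [eraseVert, Finset.mem_erase, List.mem_cons]
    tauto

lemma subG_adj (G : HCGraph ℕ) (v : ℕ) (i : ℕ) : (subG G v i).adj = G.adj :=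
  foldl_erase_adj _ _

lemma mem_subG {G : HCGraph ℕ} {v : ℕ} {i : ℕ} {x : ℕ} :
    x ∈ (subG G v i).verts ↔ (x ∈ G.verts ∧ x ≠ v) ∧ x ∉ (nbrList G v).take i := by
  rw [subG, foldl_erase_verts]
  simp only [eraseVert, Finset.mem_erase]
  tauto

lemma subG_subset (G : HCGraph ℕ) (v : ℕ) (i : ℕ) : (subG G v i).verts ⊆ G.verts :=
  fun x hx => (mem_subG.1 hx).1.1

lemma subG_simple {G : HCGraph ℕ} (hG : G.IsSimple) (v : ℕ) (i : ℕ) :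
    (subG G v i).IsSimple := by
  rw [IsSimple, subG_adj]; exact hG

lemma subG_card {G : HCGraph ℕ} {v : ℕ} (hv : v ∈ G.verts) (i : ℕ) :
    (subG G v i).verts.card + 1 ≤ G.verts.card := by
  have hsub : (subG G v i).verts ⊆ G.verts.erase v := by
    intro x hx
    rw [Finset.mem_erase]
    exact ⟨(mem_subG.1 hx).1.2, (mem_subG.1 hx).1.1⟩
  have h2 := Finset.card_le_card hsub
  rw [Finset.card_erase_of_mem hv] at h2
  have h1 : 0 < G.verts.card := Finset.card_pos.2 ⟨v, hv⟩
  omega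

lemma subG_root_mem {G : HCGraph ℕ} {v : ℕ} {i : ℕ} (hi : i < (nbrList G v).length) :
    (nbrList G v).getD i 0 ∈ (subG G v i).verts := by
  have hget : (nbrList G v).getD i 0 = (nbrList G v)[i] := List.getD_eq_getElem _ 0 hi
  have hmem : (nbrList G v)[i] ∈ nbrList G v := List.getElem_mem hi
  rw [mem_subG, hget]
  refine ⟨⟨(mem_nbrList.1 hmem).1, mem_nbrList_ne hmem⟩, ?_⟩
  have hnd2 : ((nbrList G v).take i ++ (nbrList G v).drop i).Nodup := by
    rw [List.take_append_drop]; exact nbrList_nodup G v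
  rw [List.nodup_append] at hnd2
  intro hmem'
  exact hnd2.2.2 _ hmem' _
    (by rw [List.drop_eq_getElem_cons hi]; exact List.mem_cons_self) rfl

end Structural


section Invariants
open HCGraph

lemma tail_append_singleton {a : List ℕ} {v : ℕ} (h : a ≠ []) :
    (a ++ [v]).tail = a.tail ++ [v] := by
  cases a with
  | nil => exact absurd rfl h
  | cons x t => rfl

lemma headD_append_singleton {a : List ℕ} {v : ℕ} (h : a ≠ []) :
    (a ++ [v]).headD 0 = a.headD 0 := by
  cases a with
  | nil => exact absurd rfl h
  | cons x t => rfl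

lemma root_mem_TSAWAux (n : ℕ) (G : HCGraph ℕ) (v : ℕ) :
    [v] ∈ (TSAWAux n G v).verts := by
  cases n with
  | zero => simp [TSAWAux]
  | succ n => exact mem_TSAWAux_succ.2 (Or.inl rfl)

lemma TSAWAux_verts_spec : ∀ (n : ℕ) (G : HCGraph ℕ) (v : ℕ), ∀ w ∈ (TSAWAux n G v).verts,
    w ≠ [] ∧ w.getLast? = some v := by
  intro n
  induction n with
  | zero =>
    intro G v w hw
    simp only [TSAWAux, Finset.mem_singleton] at hw
    subst hw; simp
  | succ n ih =>
    intro G v w hw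
    rcases mem_TSAWAux_succ.1 hw with rfl | ⟨T, hT, a, ha, rfl⟩
    · simp
    · exact ⟨by simp, List.getLast?_concat⟩

lemma TSAWAux_parent : ∀ (n : ℕ) (G : HCGraph ℕ) (v : ℕ), ∀ w ∈ (TSAWAux n G v).verts,
    w ≠ [v] → w.tail ∈ (TSAWAux n G v).verts ∧ 2 ≤ w.length ∧
      (TSAWAux n G v).adj w w.tail = true ∧ (TSAWAux n G v).adj w.tail w = true := by
  intro n
  induction n with
  | zero =>
    intro G v w hw hne
    simp only [TSAWAux, Finset.mem_singleton] at hw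
    exact absurd hw hne
  | succ n ih =>
    intro G v w hw hne
    rcases mem_TSAWAux_succ.1 hw with rfl | ⟨T, hT, a, ha, rfl⟩
    · exact absurd rfl hne
    · obtain ⟨i, hi, rfl⟩ := mem_treesOf.1 hT
      have hroot : (nbrList G v).getD i 0 ∈ nbrList G v := by
        rw [List.getD_eq_getElem _ 0 hi]; exact List.getElem_mem hi
      have hane : a ≠ [] := (TSAWAux_verts_spec n _ _ a ha).1
      by_cases hcase : a = [(nbrList G v).getD i 0]
      · subst hcase
        simp only [List.singleton_append, List.tail_cons, List.length_cons,
          List.length_singleton]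
        refine ⟨root_mem_TSAWAux _ G v, by omega, ?_, ?_⟩
        · exact TSAWAux_adj_iff.2 (Or.inr (Or.inl ⟨rfl, _, hroot, rfl⟩))
        · exact TSAWAux_adj_iff.2 (Or.inl ⟨rfl, _, hroot, rfl⟩)
      · obtain ⟨hta, hlen, hadj1, hadj2⟩ := ih (subG G v i) ((nbrList G v).getD i 0) a ha hcase
        have htail : (a ++ [v]).tail = a.tail ++ [v] := tail_append_singleton hane
        rw [htail]
        refine ⟨mem_TSAWAux_succ.2 (Or.inr ⟨_, hT, a.tail, hta, rfl⟩), by simp; omega, ?_, ?_⟩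
        · refine TSAWAux_adj_iff.2 (Or.inr (Or.inr ⟨_, hT, ?_, ?_, ?_⟩))
          · rw [List.dropLast_concat]; exact ha
          · rw [List.dropLast_concat]; exact hta
          · rw [List.dropLast_concat, List.dropLast_concat]; exact hadj1
        · refine TSAWAux_adj_iff.2 (Or.inr (Or.inr ⟨_, hT, ?_, ?_, ?_⟩))
          · rw [List.dropLast_concat]; exact hta
          · rw [List.dropLast_concat]; exact ha
          · rw [List.dropLast_concat, List.dropLast_concat]; exact hadj2

lemma TSAWAux_adj_shape : ∀ (n : ℕ) (G : HCGraph ℕ) (v : ℕ), ∀ x ∈ (TSAWAux n G v).verts,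
    ∀ y ∈ (TSAWAux n G v).verts, (TSAWAux n G v).adj x y = true →
      y = x.tail ∨ x = y.tail := by
  intro n
  induction n with
  | zero =>
    intro G v x hx y hy hadj
    simp only [TSAWAux] at hadj
    exact absurd hadj (by simp)
  | succ n ih =>
    intro G v x hx y hy hadj
    rcases TSAWAux_adj_iff.1 hadj with ⟨rfl, u, hu, rfl⟩ | ⟨rfl, u, hu, rfl⟩ |
      ⟨T, hT, hxd, hyd, hTadj⟩
    · exact Or.inr rfl
    · exact Or.inl rfl
    · obtain ⟨i, hi, rfl⟩ := mem_treesOf.1 hT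
      have hx' : x = x.dropLast ++ [v] := by
        rcases mem_TSAWAux_succ.1 hx with rfl | ⟨T', hT', a, ha, rfl⟩
        · exact absurd (TSAWAux_verts_spec n _ _ _ hxd).1 (by simp)
        · rw [List.dropLast_concat]
      have hy' : y = y.dropLast ++ [v] := by
        rcases mem_TSAWAux_succ.1 hy with rfl | ⟨T', hT', a, ha, rfl⟩
        · exact absurd (TSAWAux_verts_spec n _ _ _ hyd).1 (by simp)
        · rw [List.dropLast_concat]
      have hxne : x.dropLast ≠ [] := (TSAWAux_verts_spec n _ _ _ hxd).1
      have hyne : y.dropLast ≠ [] := (TSAWAux_verts_spec n _ _ _ hyd).1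
      rcases ih (subG G v i) _ _ hxd _ hyd hTadj with h | h
      · left
        rw [hy', h, ← tail_append_singleton hxne, ← hx']
      · right
        rw [hx', h, ← tail_append_singleton hyne, ← hy']

lemma TSAWAux_head : ∀ (n : ℕ) (G : HCGraph ℕ) (v : ℕ), v ∈ G.verts →
    ∀ w ∈ (TSAWAux n G v).verts, w.headD 0 ∈ G.verts := by
  intro n
  induction n with
  | zero =>
    intro G v hv w hw
    simp only [TSAWAux, Finset.mem_singleton] at hw
    subst hw; simpa
  | succ n ih =>
    intro G v hv w hw
    rcases mem_TSAWAux_succ.1 hw with rfl | ⟨T, hT, a, ha, rfl⟩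
    · simpa
    · obtain ⟨i, hi, rfl⟩ := mem_treesOf.1 hT
      have hane : a ≠ [] := (TSAWAux_verts_spec n _ _ a ha).1
      rw [headD_append_singleton hane]
      exact subG_subset G v i (ih (subG G v i) _ (subG_root_mem hi) a ha)

lemma nbrList_ne_nil_imp {G : HCGraph ℕ} {v : ℕ} (h : nbrList G v ≠ []) : v ∈ G.verts := by
  obtain ⟨u, hu⟩ := List.exists_mem_of_ne_nil _ h
  exact (mem_nbrList.1 hu).2.2.1

lemma TSAWAux_stab : ∀ (n : ℕ) (G : HCGraph ℕ) (v : ℕ), G.verts.card ≤ n →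
    TSAWAux (n+1) G v = TSAWAux n G v := by
  intro n
  induction n with
  | zero =>
    intro G v hcard
    have hverts : G.verts = ∅ := Finset.card_eq_zero.1 (Nat.le_zero.1 hcard)
    have hnbr : nbrList G v = [] := by
      by_contra h
      have := nbrList_ne_nil_imp h
      rw [hverts] at this
      simp at this
    have htrees : treesOf 0 G v = [] := by simp [treesOf, hnbr]
    apply HCGraph.ext'
    · rw [TSAWAux_succ, htrees]
      rfl
    · rw [TSAWAux_succ, htrees, hnbr]
      funext x y
      simp [TSAWAux]
  | succ n ih =>
    intro G v hcard
    have htrees : treesOf (n+1) G v = treesOf n G v := by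
      rw [treesOf, treesOf]
      apply List.map_congr_left
      intro i hi
      rw [List.mem_range] at hi
      have hv : v ∈ G.verts := nbrList_ne_nil_imp (by
        intro h; rw [h] at hi; simp at hi)
      have := subG_card hv i
      exact ih (subG G v i) _ (by omega)
    rw [TSAWAux_succ, TSAWAux_succ, htrees]

lemma TSAWAux_eq_TSAW {n : ℕ} (G : HCGraph ℕ) (v : ℕ) (h : G.verts.card ≤ n) :
    TSAWAux n G v = TSAW G v := by
  rw [TSAW]
  induction n with
  | zero => rw [Nat.le_zero.1 h]
  | succ n ih =>
    rcases Nat.lt_or_ge G.verts.card (n+1) with hlt | hge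
    · rw [TSAWAux_stab n G v (by omega), ih (by omega)]
    · rw [Nat.le_antisymm h hge]

end Invariants


section TreeZ
open HCGraph

lemma bool_eq_of_iff {a b : Bool} (h : a = true ↔ b = true) : a = b := by
  cases a <;> cases b <;> simp_all

lemma subT_getLast {n : ℕ} {G : HCGraph ℕ} {v : ℕ} {i : ℕ} {a : List ℕ}
    (ha : a ∈ (subT n G v i).verts) :
    a ≠ [] ∧ a.getLast? = some ((nbrList G v).getD i 0) :=
  TSAWAux_verts_spec n _ _ a ha

lemma subT_index_unique {n : ℕ} {G : HCGraph ℕ} {v : ℕ} {i j : ℕ}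
    (hi : i < (nbrList G v).length) (hj : j < (nbrList G v).length) {a b : List ℕ}
    (ha : a ∈ (subT n G v i).verts) (hb : b ∈ (subT n G v j).verts)
    (hab : a.getLast? = b.getLast?) : i = j := by
  have h1 := (subT_getLast ha).2
  have h2 := (subT_getLast hb).2
  rw [h1, h2] at hab
  have : (nbrList G v).getD i 0 = (nbrList G v).getD j 0 := Option.some.inj hab
  rw [List.getD_eq_getElem _ 0 hi, List.getD_eq_getElem _ 0 hj] at this
  exact ((nbrList_nodup G v).getElem_inj_iff).1 this

lemma concat_ne_root {a : List ℕ} {v : ℕ} (ha : a ≠ []) : a ++ [v] ≠ [v] := by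
  intro h
  have : a ++ [v] = [] ++ [v] := by simpa using h
  exact ha ((List.append_left_inj [v]).1 this)

lemma adj_lift {n : ℕ} {G : HCGraph ℕ} {v : ℕ} {i : ℕ} (hi : i < (nbrList G v).length)
    {a b : List ℕ} (ha : a ∈ (subT n G v i).verts) (hb : b ∈ (subT n G v i).verts) :
    (TSAWAux (n+1) G v).adj (a ++ [v]) (b ++ [v]) = (subT n G v i).adj a b := by
  apply bool_eq_of_iff
  constructor
  · intro h
    rcases TSAWAux_adj_iff.1 h with ⟨hx, -⟩ | ⟨hy, -⟩ | ⟨T, hT, hxd, hyd, hTadj⟩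
    · exact absurd hx (concat_ne_root (subT_getLast ha).1)
    · exact absurd hy (concat_ne_root (subT_getLast hb).1)
    · obtain ⟨k, hk, rfl⟩ := mem_treesOf.1 hT
      rw [List.dropLast_concat] at hxd hyd
      rw [List.dropLast_concat, List.dropLast_concat] at hTadj
      have : k = i := subT_index_unique hk hi hxd ha rfl
      rwa [this] at hTadj
  · intro h
    refine TSAWAux_adj_iff.2 (Or.inr (Or.inr ⟨subT n G v i, mem_treesOf.2 ⟨i, hi, rfl⟩,
      ?_, ?_, ?_⟩))
    · rw [List.dropLast_concat]; exact ha
    · rw [List.dropLast_concat]; exact hb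
    · rw [List.dropLast_concat, List.dropLast_concat]; exact h

lemma adj_cross {n : ℕ} {G : HCGraph ℕ} {v : ℕ} {i j : ℕ}
    (hi : i < (nbrList G v).length) (hj : j < (nbrList G v).length) (hij : i ≠ j)
    {a b : List ℕ} (ha : a ∈ (subT n G v i).verts) (hb : b ∈ (subT n G v j).verts) :
    (TSAWAux (n+1) G v).adj (a ++ [v]) (b ++ [v]) = false := by
  rw [Bool.eq_false_iff]
  intro h
  rcases TSAWAux_adj_iff.1 h with ⟨hx, -⟩ | ⟨hy, -⟩ | ⟨T, hT, hxd, hyd, hTadj⟩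
  · exact absurd hx (concat_ne_root (subT_getLast ha).1)
  · exact absurd hy (concat_ne_root (subT_getLast hb).1)
  · obtain ⟨k, hk, rfl⟩ := mem_treesOf.1 hT
    rw [List.dropLast_concat] at hxd hyd
    have h1 : k = i := subT_index_unique hk hi hxd ha rfl
    have h2 : k = j := subT_index_unique hk hj hyd hb rfl
    exact hij (h1 ▸ h2)

lemma pieces_pairwise (n : ℕ) (G : HCGraph ℕ) (v : ℕ) (Q : ℕ → Finset (List ℕ))
    (hQ : ∀ i, i < (nbrList G v).length → Q i ⊆ (subT n G v i).verts) :
    ((List.range (nbrList G v).length).map fun i =>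
        (Q i).image (fun a => a ++ [v])).Pairwise fun P P' =>
      ∀ x ∈ P, ∀ y ∈ P', x ≠ y ∧ (TSAWAux (n+1) G v).adj x y = false ∧
        (TSAWAux (n+1) G v).adj y x = false := by
  rw [List.pairwise_map]
  refine List.pairwise_lt_range.imp_of_mem ?_
  intro i j hi hj hij x hx y hy
  rw [List.mem_range] at hi hj
  obtain ⟨a, ha, rfl⟩ := Finset.mem_image.1 hx
  obtain ⟨b, hb, rfl⟩ := Finset.mem_image.1 hy
  have ha' := hQ i hi ha
  have hb' := hQ j hj hb
  refine ⟨?_, adj_cross hi hj (by omega) ha' hb', adj_cross hj hi (by omega) hb' ha'⟩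
  intro h
  have : a = b := (List.append_left_inj [v]).1 h
  subst this
  exact absurd (subT_index_unique hi hj ha' hb' rfl) (by omega)

end TreeZ


section TreeZ2
open HCGraph

variable {K : Type} [Field K]

lemma getD_mem_nbrList {G : HCGraph ℕ} {v i : ℕ} (hi : i < (nbrList G v).length) :
    (nbrList G v).getD i 0 ∈ nbrList G v := by
  rw [List.getD_eq_getElem _ 0 hi]; exact List.getElem_mem hi

lemma verts_erase_root (n : ℕ) (G : HCGraph ℕ) (v : ℕ) :
    (TSAWAux (n+1) G v).verts.erase [v] =
      ((List.range (nbrList G v).length).map fun i =>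
        ((subT n G v i).verts).image (fun a => a ++ [v])).foldr (· ∪ ·) ∅ := by
  ext x
  rw [Finset.mem_erase, HCGraph.mem_foldr_union]
  constructor
  · rintro ⟨hne, hx⟩
    rcases mem_TSAWAux_succ.1 hx with rfl | ⟨T, hT, a, ha, rfl⟩
    · exact absurd rfl hne
    · obtain ⟨i, hi, rfl⟩ := mem_treesOf.1 hT
      exact ⟨_, List.mem_map.2 ⟨i, List.mem_range.2 hi, rfl⟩,
        Finset.mem_image.2 ⟨a, ha, rfl⟩⟩
  · rintro ⟨P, hP, hx⟩
    obtain ⟨i, hi, rfl⟩ := List.mem_map.1 hP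
    rw [List.mem_range] at hi
    obtain ⟨a, ha, rfl⟩ := Finset.mem_image.1 hx
    exact ⟨concat_ne_root (subT_getLast ha).1,
      mem_TSAWAux_succ.2 (Or.inr ⟨_, mem_treesOf.2 ⟨i, hi, rfl⟩, a, ha, rfl⟩)⟩

lemma Zmout_TSAWAux (n : ℕ) (G : HCGraph ℕ) (v : ℕ) (x : List ℕ → K) :
    (TSAWAux (n+1) G v).Zmout [v] x =
      ∏ i ∈ Finset.range (nbrList G v).length,
        (subT n G v i).Zm (fun a => x (a ++ [v])) := by
  rw [HCGraph.Zmout_eq]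
  have hT : (TSAWAux (n+1) G v).eraseVert [v] =
      ⟨((List.range (nbrList G v).length).map fun i =>
        ((subT n G v i).verts).image (fun a => a ++ [v])).foldr (· ∪ ·) ∅,
       (TSAWAux (n+1) G v).adj⟩ :=
    HCGraph.ext' (verts_erase_root n G v) rfl
  rw [hT, HCGraph.Zm_foldr_union _ _ _ (pieces_pairwise n G v _ fun i _ => subset_rfl),
    List.map_map, list_map_range_prod]
  apply Finset.prod_congr rfl
  intro i hi
  rw [Finset.mem_range] at hi
  exact HCGraph.Zm_image x (fun a _ b _ h => (List.append_left_inj [v]).1 h)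
    (fun a ha b hb => adj_lift hi ha hb)

lemma adj_root_self (n : ℕ) (G : HCGraph ℕ) (v : ℕ) :
    (TSAWAux (n+1) G v).adj [v] [v] = false := by
  rw [Bool.eq_false_iff]
  intro h
  rcases TSAWAux_adj_iff.1 h with ⟨-, u, -, hy⟩ | ⟨-, u, -, hy⟩ | ⟨T, hT, hxd, -, -⟩
  · simp at hy
  · simp at hy
  · obtain ⟨i, hi, rfl⟩ := mem_treesOf.1 hT
    exact (subT_getLast hxd).1 rfl

lemma adj_root_iff {n : ℕ} {G : HCGraph ℕ} {v i : ℕ} (hi : i < (nbrList G v).length)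
    {a : List ℕ} (ha : a ∈ (subT n G v i).verts) :
    ((TSAWAux (n+1) G v).adj [v] (a ++ [v]) = true ∨
      (TSAWAux (n+1) G v).adj (a ++ [v]) [v] = true) ↔
      a = [(nbrList G v).getD i 0] := by
  constructor
  · have key : ∀ u ∈ nbrList G v, a ++ [v] = [u, v] → a = [(nbrList G v).getD i 0] := by
      intro u hu he
      have : a = [u] := by
        have : a ++ [v] = [u] ++ [v] := by simpa using he
        exact (List.append_left_inj [v]).1 this
      subst this
      have := (subT_getLast ha).2
      simp only [List.getLast?_singleton, Option.some.injEq] at this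
      rw [this]
    rintro (h | h)
    · rcases TSAWAux_adj_iff.1 h with ⟨-, u, hu, hy⟩ | ⟨hy, -⟩ | ⟨T, hT, hxd, -, -⟩
      · exact key u hu hy
      · exact absurd hy (concat_ne_root (subT_getLast ha).1)
      · obtain ⟨k, hk, rfl⟩ := mem_treesOf.1 hT
        exact absurd rfl (subT_getLast hxd).1
    · rcases TSAWAux_adj_iff.1 h with ⟨hy, -⟩ | ⟨-, u, hu, hy⟩ | ⟨T, hT, -, hyd, -⟩
      · exact absurd hy (concat_ne_root (subT_getLast ha).1)
      · exact key u hu hy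
      · obtain ⟨k, hk, rfl⟩ := mem_treesOf.1 hT
        exact absurd rfl (subT_getLast hyd).1
  · intro h
    subst h
    exact Or.inl (TSAWAux_adj_iff.2 (Or.inl ⟨rfl, _, getD_mem_nbrList hi, rfl⟩))

lemma Zmin_TSAWAux (n : ℕ) (G : HCGraph ℕ) (v : ℕ) (x : List ℕ → K) :
    (TSAWAux (n+1) G v).Zmin [v] x =
      x [v] * ∏ i ∈ Finset.range (nbrList G v).length,
        (subT n G v i).Zmout [(nbrList G v).getD i 0] (fun a => x (a ++ [v])) := by
  rw [HCGraph.Zmin_eq _ _ _ (root_mem_TSAWAux _ G v) (adj_root_self n G v)]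
  congr 1
  have hset : ((TSAWAux (n+1) G v).verts.erase [v]) \ (TSAWAux (n+1) G v).rawNbr [v] =
      ((List.range (nbrList G v).length).map fun i =>
        ((subT n G v i).verts.erase [(nbrList G v).getD i 0]).image
          (fun a => a ++ [v])).foldr (· ∪ ·) ∅ := by
    ext x'
    rw [Finset.mem_sdiff, HCGraph.mem_foldr_union]
    constructor
    · rintro ⟨hx, hraw⟩
      have hx' := hx
      rw [Finset.mem_erase] at hx'
      rcases mem_TSAWAux_succ.1 hx'.2 with rfl | ⟨T, hT, a, ha, rfl⟩
      · exact absurd rfl hx'.1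
      · obtain ⟨i, hi, rfl⟩ := mem_treesOf.1 hT
        refine ⟨_, List.mem_map.2 ⟨i, List.mem_range.2 hi, rfl⟩,
          Finset.mem_image.2 ⟨a, Finset.mem_erase.2 ⟨?_, ha⟩, rfl⟩⟩
        intro he
        apply hraw
        rw [rawNbr, Finset.mem_filter]
        refine ⟨hx'.2, ?_⟩
        rw [Bool.or_eq_true_iff]
        rcases (adj_root_iff hi ha).2 he with h | h
        · exact Or.inl h
        · exact Or.inr h
    · rintro ⟨P, hP, hx⟩
      obtain ⟨i, hi, rfl⟩ := List.mem_map.1 hP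
      rw [List.mem_range] at hi
      obtain ⟨a, ha, rfl⟩ := Finset.mem_image.1 hx
      rw [Finset.mem_erase] at ha
      have hmem : a ++ [v] ∈ (TSAWAux (n+1) G v).verts :=
        mem_TSAWAux_succ.2 (Or.inr ⟨_, mem_treesOf.2 ⟨i, hi, rfl⟩, a, ha.2, rfl⟩)
      refine ⟨Finset.mem_erase.2 ⟨concat_ne_root (subT_getLast ha.2).1, hmem⟩, ?_⟩
      rw [rawNbr, Finset.mem_filter]
      rintro ⟨-, hadj⟩
      rw [Bool.or_eq_true_iff] at hadj
      exact ha.1 ((adj_root_iff hi ha.2).1 hadj)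
  rw [show (⟨((TSAWAux (n+1) G v).verts.erase [v]) \ (TSAWAux (n+1) G v).rawNbr [v],
      (TSAWAux (n+1) G v).adj⟩ : HCGraph (List ℕ)) =
      ⟨((List.range (nbrList G v).length).map fun i =>
        ((subT n G v i).verts.erase [(nbrList G v).getD i 0]).image
          (fun a => a ++ [v])).foldr (· ∪ ·) ∅, (TSAWAux (n+1) G v).adj⟩
    from HCGraph.ext' hset rfl]
  rw [HCGraph.Zm_foldr_union _ _ _
    (pieces_pairwise n G v _ fun i _ => Finset.erase_subset _ _),
    List.map_map, list_map_range_prod]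
  apply Finset.prod_congr rfl
  intro i hi
  rw [Finset.mem_range] at hi
  rw [HCGraph.Zmout_eq]
  exact HCGraph.Zm_image x (fun a _ b _ h => (List.append_left_inj [v]).1 h)
    (fun a ha b hb => adj_lift hi (Finset.mem_of_mem_erase ha) (Finset.mem_of_mem_erase hb))

end TreeZ2


section MainRatio
open HCGraph

lemma HCGraph.Zmout_congr {α : Type} {K : Type} [Field K] {G : HCGraph α} {r : α}
    {x y : α → K} (h : ∀ u ∈ G.verts, x u = y u) : G.Zmout r x = G.Zmout r y := by
  refine Finset.sum_congr rfl fun I hI => Finset.prod_congr rfl fun u hu => ?_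
  rw [Finset.mem_filter] at hI
  exact h u ((HCGraph.mem_indepSets.1 hI.1).1 hu)

lemma Xvar_eta : (fun u => Xvar (id u)) = Xvar := funext fun u => rfl

lemma Zm_Xvar_ne_zero (G : HCGraph ℕ) : G.Zm Xvar ≠ 0 := by
  have h := HCGraph.Zm_comp_ne_zero G id
  rwa [Xvar_eta] at h

lemma ratio_helper {K : Type} [Field K] {a b c e : K} (hb : b ≠ 0) (he : e ≠ 0)
    (hab : a + b ≠ 0) (hce : c + e ≠ 0) (h : a / b = c / e) :
    b / (a + b) = e / (c + e) := by
  rw [div_eq_div_iff hb he] at h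
  rw [div_eq_div_iff hab hce]
  linear_combination -h

lemma subG_succ {G : HCGraph ℕ} {v : ℕ} {i : ℕ} (hi : i < (nbrList G v).length) :
    subG G v (i+1) = (subG G v i).eraseVert ((nbrList G v).getD i 0) := by
  rw [subG, subG, List.take_succ, List.getElem?_eq_getElem hi, Option.toList_some,
    List.foldl_append, List.getD_eq_getElem _ 0 hi]
  rfl

lemma graph_inner_eq (G : HCGraph ℕ) (hG : G.IsSimple) (v : ℕ) (hv : v ∈ G.verts) :
    (⟨(G.verts.erase v) \ G.rawNbr v, G.adj⟩ : HCGraph ℕ) =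
      subG G v (nbrList G v).length := by
  refine HCGraph.ext' ?_ (subG_adj G v _).symm
  ext x
  rw [Finset.mem_sdiff, Finset.mem_erase, mem_subG, List.take_length]
  constructor
  · rintro ⟨⟨hne, hxv⟩, hraw⟩
    refine ⟨⟨hxv, hne⟩, fun hmem => hraw ?_⟩
    rw [HCGraph.rawNbr, Finset.mem_filter, Bool.or_eq_true_iff]
    exact ⟨hxv, (mem_nbrList.1 hmem).2.2.2.2⟩
  · rintro ⟨⟨hxv, hne⟩, hnn⟩
    refine ⟨⟨hne, hxv⟩, fun hraw => hnn ?_⟩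
    rw [HCGraph.rawNbr, Finset.mem_filter, Bool.or_eq_true_iff] at hraw
    exact mem_nbrList.2 ⟨hxv, ⟨fun h => hne h.symm, hv, hxv, hraw.2⟩⟩

lemma Zmin_graph (G : HCGraph ℕ) (hG : G.IsSimple) (v : ℕ) (hv : v ∈ G.verts) :
    G.Zmin v Xvar = Xvar v * (subG G v (nbrList G v).length).Zm Xvar := by
  rw [HCGraph.Zmin_eq G v Xvar hv (hG.2 v), graph_inner_eq G hG v hv]

set_option maxHeartbeats 2000000 in
lemma ratio_TSAWAux_eq : ∀ (n : ℕ) (G : HCGraph ℕ) (v : ℕ), G.IsSimple → v ∈ G.verts →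
    G.verts.card ≤ n →
    (TSAWAux n G v).ratioM [v] (fun w => Xvar (w.headD 0)) = G.ratioM v Xvar := by
  intro n
  induction n with
  | zero =>
    intro G v hG hv hcard
    exact absurd (Finset.card_pos.2 ⟨v, hv⟩) (by omega)
  | succ n ih =>
    intro G v hG hv hcard
    have hZmT : ∀ i < (nbrList G v).length,
        (subT n G v i).Zm (fun a => Xvar (((a : List ℕ) ++ [v]).headD 0)) =
        (subT n G v i).Zm (fun w => Xvar (w.headD 0)) := by
      intro i hi
      apply HCGraph.Zm_congr
      intro a ha
      rw [headD_append_singleton (subT_getLast ha).1]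
    have hZoutT' : ∀ i < (nbrList G v).length,
        (subT n G v i).Zmout [(nbrList G v).getD i 0]
          (fun a => Xvar (((a : List ℕ) ++ [v]).headD 0)) =
        (subT n G v i).Zmout [(nbrList G v).getD i 0] (fun w => Xvar (w.headD 0)) := by
      intro i hi
      apply HCGraph.Zmout_congr
      intro a ha
      rw [headD_append_singleton (subT_getLast ha).1]
    have hT1 : (TSAWAux (n+1) G v).ratioM [v] (fun w => Xvar (w.headD 0)) =
        Xvar v * ∏ i ∈ Finset.range (nbrList G v).length,
          ((subT n G v i).Zmout [(nbrList G v).getD i 0] (fun w => Xvar (w.headD 0)) /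
            (subT n G v i).Zm (fun w => Xvar (w.headD 0))) := by
      rw [HCGraph.ratioM, Zmin_TSAWAux, Zmout_TSAWAux, mul_div_assoc,
        ← Finset.prod_div_distrib]
      refine congrArg₂ (· * ·) rfl (Finset.prod_congr rfl fun i hi => ?_)
      rw [hZoutT' i (Finset.mem_range.1 hi), hZmT i (Finset.mem_range.1 hi)]
    have hG1 : G.ratioM v Xvar = Xvar v * ∏ i ∈ Finset.range (nbrList G v).length,
        ((subG G v i).Zmout ((nbrList G v).getD i 0) Xvar / (subG G v i).Zm Xvar) := by
      have hfG : ∀ i, (subG G v i).Zm Xvar ≠ 0 := fun i => Zm_Xvar_ne_zero _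
      rw [HCGraph.ratioM, Zmin_graph G hG v hv, HCGraph.Zmout_eq]
      have h0 : G.eraseVert v = subG G v 0 := rfl
      rw [h0, mul_div_assoc]
      congr 1
      rw [← prod_range_div_telescope hfG (nbrList G v).length]
      refine Finset.prod_congr rfl fun i hi => ?_
      rw [subG_succ (Finset.mem_range.1 hi), ← HCGraph.Zmout_eq]
    rw [hT1, hG1]
    refine congrArg₂ (· * ·) rfl (Finset.prod_congr rfl fun i hi => ?_)
    rw [Finset.mem_range] at hi
    have hsimple := subG_simple hG v i
    have hvi := subG_root_mem hi
    have hcard' : (subG G v i).verts.card ≤ n := by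
      have := subG_card hv i; omega
    have hih := ih (subG G v i) ((nbrList G v).getD i 0) hsimple hvi hcard'
    rw [HCGraph.ratioM, HCGraph.ratioM] at hih
    have hbT : (subT n G v i).Zmout [(nbrList G v).getD i 0]
        (fun w => Xvar (w.headD 0)) ≠ 0 := by
      rw [HCGraph.Zmout_eq]
      exact HCGraph.Zm_comp_ne_zero ((subT n G v i).eraseVert [(nbrList G v).getD i 0])
        (fun w => w.headD 0)
    have hbG : (subG G v i).Zmout ((nbrList G v).getD i 0) Xvar ≠ 0 := by
      rw [HCGraph.Zmout_eq]; exact Zm_Xvar_ne_zero _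
    have haT : (subT n G v i).Zm (fun w => Xvar (w.headD 0)) ≠ 0 :=
      HCGraph.Zm_comp_ne_zero (subT n G v i) (fun w => w.headD 0)
    have haG : (subG G v i).Zm Xvar ≠ 0 := Zm_Xvar_ne_zero _
    rw [HCGraph.Zm_eq_Zmin_add_Zmout _ [(nbrList G v).getD i 0],
        HCGraph.Zm_eq_Zmin_add_Zmout _ ((nbrList G v).getD i 0)]
    refine ratio_helper hbT hbG ?_ ?_ hih
    · rw [← HCGraph.Zm_eq_Zmin_add_Zmout]; exact haT
    · rw [← HCGraph.Zm_eq_Zmin_add_Zmout]; exact haG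

end MainRatio


section Metric
open HCGraph

/-- Length of the longest common prefix. -/
def cpl : List ℕ → List ℕ → ℕ
  | a :: as, b :: bs => if a = b then cpl as bs + 1 else 0
  | _, _ => 0

/-- Length of the longest common suffix. -/
def csl (x y : List ℕ) : ℕ := cpl x.reverse y.reverse

lemma cpl_self : ∀ (a : List ℕ), cpl a a = a.length
  | [] => rfl
  | x :: xs => by rw [cpl, if_pos rfl, cpl_self xs]; rfl

lemma cpl_le_right : ∀ (a b : List ℕ), cpl a b ≤ b.length
  | [], _ => by simp [cpl]
  | _ :: _, [] => by simp [cpl]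
  | x :: xs, y :: ys => by
    rw [cpl]
    split
    · have := cpl_le_right xs ys
      simp only [List.length_cons]
      omega
    · omega

lemma cpl_dropLast_le : ∀ (a b : List ℕ), cpl a.dropLast b ≤ cpl a b
  | [], _ => by simp [cpl]
  | [x], b => by simp [cpl]
  | x :: y :: xs, [] => by simp [cpl]
  | x :: y :: xs, z :: zs => by
    show cpl (x :: (y :: xs).dropLast) (z :: zs) ≤ cpl (x :: y :: xs) (z :: zs)
    rw [cpl, cpl]
    split
    · have := cpl_dropLast_le (y :: xs) zs
      omega
    · omega

lemma cpl_le_dropLast_add_one : ∀ (a b : List ℕ), cpl a b ≤ cpl a.dropLast b + 1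
  | [], _ => by simp [cpl]
  | [x], b => by
    cases b with
    | nil => simp [cpl]
    | cons z zs => rw [cpl]; split <;> simp [cpl]
  | x :: y :: xs, [] => by simp [cpl]
  | x :: y :: xs, z :: zs => by
    rw [show (x :: y :: xs).dropLast = x :: (y :: xs).dropLast from rfl, cpl, cpl]
    split
    · have := cpl_le_dropLast_add_one (y :: xs) zs
      omega
    · omega

lemma cpl_prefix : ∀ (a b : List ℕ), cpl a b = b.length → b <+: a
  | _, [] => fun _ => List.nil_prefix
  | [], y :: ys => by simp [cpl]
  | x :: xs, y :: ys => by
    rw [cpl]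
    split
    · rename_i he
      intro h
      subst he
      have : cpl xs ys = ys.length := by
        simp only [List.length_cons] at h
        omega
      obtain ⟨t, ht⟩ := cpl_prefix xs ys this
      exact ⟨t, by rw [List.cons_append, ht]⟩
    · intro h
      simp at h

lemma reverse_tail_eq (x : List ℕ) : x.tail.reverse = x.reverse.dropLast := by
  cases x with
  | nil => rfl
  | cons h t => rw [List.tail_cons, List.reverse_cons, List.dropLast_concat]

lemma csl_self (a : List ℕ) : csl a a = a.length := by
  rw [csl, cpl_self, List.length_reverse]

lemma csl_le_right (a b : List ℕ) : csl a b ≤ b.length := by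
  rw [csl]
  have := cpl_le_right a.reverse b.reverse
  rwa [List.length_reverse] at this

lemma csl_tail_le (a b : List ℕ) : csl a.tail b ≤ csl a b := by
  rw [csl, csl, reverse_tail_eq]
  exact cpl_dropLast_le _ _

lemma csl_le_tail_add_one (a b : List ℕ) : csl a b ≤ csl a.tail b + 1 := by
  rw [csl, csl, reverse_tail_eq]
  exact cpl_le_dropLast_add_one _ _

lemma csl_suffix {a b : List ℕ} (h : csl a b = b.length) : b <:+ a := by
  rw [csl] at h
  rw [← List.length_reverse] at h
  exact List.reverse_prefix.1 (cpl_prefix _ _ h)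

lemma walk_length_bound (n : ℕ) (G : HCGraph ℕ) (v : ℕ) {a b : List ℕ}
    (p : (TSAWAux n G v).toSG.Walk a b) :
    a.length + b.length ≤ p.length + 2 * csl a b := by
  induction p with
  | nil => rw [csl_self]; omega
  | @cons x c b h p ih =>
    have hx : x ∈ (TSAWAux n G v).verts := h.2.1
    have hc : c ∈ (TSAWAux n G v).verts := h.2.2.1
    have hxne : x ≠ [] := (TSAWAux_verts_spec n G v x hx).1
    have hcne : c ≠ [] := (TSAWAux_verts_spec n G v c hc).1
    have hshape : c = x.tail ∨ x = c.tail := by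
      rcases h.2.2.2 with had | had
      · exact TSAWAux_adj_shape n G v x hx c hc had
      · rcases TSAWAux_adj_shape n G v c hc x hx had with hs | hs
        · exact Or.inr hs
        · exact Or.inl hs
    rw [SimpleGraph.Walk.length_cons]
    rcases hshape with hs | hs
    · have h1 : csl c b ≤ csl x b := hs ▸ csl_tail_le x b
      have h2 : c.length + 1 = x.length := by
        rw [hs, List.length_tail]
        have : 0 < x.length := List.length_pos_iff.2 hxne
        omega
      omega
    · have h1 : csl c b ≤ csl x b + 1 := by
        have := csl_le_tail_add_one c b
        rwa [← hs] at this
      have h2 : x.length + 1 = c.length := by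
        rw [hs, List.length_tail]
        have : 0 < c.length := List.length_pos_iff.2 hcne
        omega
      omega

lemma suffix_root {n : ℕ} {G : HCGraph ℕ} {v : ℕ} {w : List ℕ}
    (hw : w ∈ (TSAWAux n G v).verts) : [v] <:+ w := by
  obtain ⟨hne, hlast⟩ := TSAWAux_verts_spec n G v w hw
  rw [List.getLast?_eq_getLast hne, Option.some.injEq] at hlast
  exact ⟨w.dropLast, by rw [← hlast]; exact List.dropLast_append_getLast hne⟩

lemma suffix_tail {u w : List ℕ} (h : u <:+ w) (hlt : u.length < w.length) :
    u <:+ w.tail := by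
  cases w with
  | nil => simp at hlt
  | cons x t =>
    rcases List.suffix_cons_iff.1 h with rfl | h'
    · simp at hlt
    · exact h'

lemma walk_to_suffix {n : ℕ} {G : HCGraph ℕ} {v : ℕ} :
    ∀ (k : ℕ) (w u : List ℕ), w ∈ (TSAWAux n G v).verts → u ∈ (TSAWAux n G v).verts →
      u <:+ w → w.length = u.length + k →
      ∃ p : (TSAWAux n G v).toSG.Walk w u, p.length = k := by
  intro k
  induction k with
  | zero =>
    intro w u hw hu hsuf hlen
    have : u = w := hsuf.eq_of_length (by omega)
    subst this
    exact ⟨SimpleGraph.Walk.nil, rfl⟩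
  | succ k ih =>
    intro w u hw hu hsuf hlen
    have hune : u ≠ [] := (TSAWAux_verts_spec n G v u hu).1
    have hulen : 0 < u.length := List.length_pos_iff.2 hune
    have hwner : w ≠ [v] := by
      intro h
      subst h
      simp only [List.length_singleton] at hlen
      omega
    obtain ⟨htmem, hwlen2, hadj, -⟩ := TSAWAux_parent n G v w hw hwner
    have hadj' : (TSAWAux n G v).toSG.Adj w w.tail := by
      refine ⟨?_, hw, htmem, Or.inl hadj⟩
      intro h
      have := congrArg List.length h
      rw [List.length_tail] at this
      omega
    have hsuf' : u <:+ w.tail := suffix_tail hsuf (by omega)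
    have hlen' : w.tail.length = u.length + k := by
      rw [List.length_tail]; omega
    obtain ⟨p, hp⟩ := ih w.tail u htmem hu hsuf' hlen'
    exact ⟨SimpleGraph.Walk.cons hadj' p, by rw [SimpleGraph.Walk.length_cons, hp]⟩

lemma reachable_suffix {n : ℕ} {G : HCGraph ℕ} {v : ℕ} {w u : List ℕ}
    (hw : w ∈ (TSAWAux n G v).verts) (hu : u ∈ (TSAWAux n G v).verts) (h : u <:+ w) :
    (TSAWAux n G v).toSG.Reachable w u := by
  obtain ⟨p, -⟩ := walk_to_suffix (w.length - u.length) w u hw hu h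
    (by have := h.length_le; omega)
  exact p.reachable

lemma dist_suffix {n : ℕ} {G : HCGraph ℕ} {v : ℕ} {w u : List ℕ}
    (hw : w ∈ (TSAWAux n G v).verts) (hu : u ∈ (TSAWAux n G v).verts) (h : u <:+ w) :
    (TSAWAux n G v).toSG.dist w u + u.length = w.length := by
  have hle := h.length_le
  obtain ⟨p, hp⟩ := walk_to_suffix (w.length - u.length) w u hw hu h (by omega)
  have h1 : (TSAWAux n G v).toSG.dist w u ≤ w.length - u.length := by
    have := SimpleGraph.dist_le p
    omega
  obtain ⟨q, hq⟩ := (p.reachable).exists_walk_length_eq_dist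
  have h2 := walk_length_bound n G v q
  have h3 : csl w u ≤ u.length := csl_le_right w u
  omega

lemma dist_root {n : ℕ} {G : HCGraph ℕ} {v : ℕ} {w : List ℕ}
    (hw : w ∈ (TSAWAux n G v).verts) :
    (TSAWAux n G v).toSG.dist w [v] + 1 = w.length := by
  have := dist_suffix hw (root_mem_TSAWAux n G v) (suffix_root hw)
  simpa using this

lemma dist_not_suffix {n : ℕ} {G : HCGraph ℕ} {v : ℕ} {w u : List ℕ}
    (hw : w ∈ (TSAWAux n G v).verts) (hu : u ∈ (TSAWAux n G v).verts)
    (hr : (TSAWAux n G v).toSG.Reachable w u) (h : ¬ u <:+ w) :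
    w.length + 2 ≤ (TSAWAux n G v).toSG.dist w u + u.length := by
  obtain ⟨q, hq⟩ := hr.exists_walk_length_eq_dist
  have h2 := walk_length_bound n G v q
  have h3 : csl w u ≤ u.length := csl_le_right w u
  have h4 : csl w u ≠ u.length := fun hc => h (csl_suffix hc)
  omega

lemma subtreeAt_verts {n : ℕ} {G : HCGraph ℕ} {v : ℕ} {u : List ℕ}
    (hu : u ∈ (TSAWAux n G v).verts) :
    (subtreeAt (TSAWAux n G v) [v] u).verts =
      (TSAWAux n G v).verts.filter (fun w => u <:+ w) := by
  ext w
  rw [subtreeAt, Finset.mem_filter, Finset.mem_filter]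
  constructor
  · rintro ⟨hw, hreach, hdist⟩
    refine ⟨hw, ?_⟩
    by_contra hns
    have h1 := dist_not_suffix hw hu hreach hns
    have h2 := dist_root hw
    have h3 := dist_root hu
    omega
  · rintro ⟨hw, hsuf⟩
    refine ⟨hw, reachable_suffix hw hu hsuf, ?_⟩
    have h1 := dist_suffix hw hu hsuf
    have h2 := dist_root hw
    have h3 := dist_root hu
    omega

end Metric


section Part2
open HCGraph

lemma toSG_adj {α : Type} {G : HCGraph α} {x y : α} :
    G.toSG.Adj x y ↔ x ≠ y ∧ x ∈ G.verts ∧ y ∈ G.verts ∧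
      (G.adj x y = true ∨ G.adj y x = true) := Iff.rfl

lemma RootedIso_of_eq {α : Type} {G H : HCGraph α} {a : α} (h : G = H) :
    RootedIso G a H a := by
  subst h
  exact ⟨id, rfl, Set.bijOn_id _, fun x _ y _ => Iff.rfl⟩

lemma RootedIso_trans {α β γ : Type} {A : HCGraph α} {B : HCGraph β} {C : HCGraph γ}
    {a : α} {b : β} {c : γ} (h1 : RootedIso A a B b) (h2 : RootedIso B b C c) :
    RootedIso A a C c := by
  obtain ⟨f, hf1, hf2, hf3⟩ := h1
  obtain ⟨g, hg1, hg2, hg3⟩ := h2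
  refine ⟨g ∘ f, by simp [hf1, hg1], hg2.comp hf2, ?_⟩
  intro x hx y hy
  exact (hf3 x hx y hy).trans
    (hg3 (f x) (Finset.mem_coe.1 (hf2.mapsTo (Finset.mem_coe.2 hx)))
      (f y) (Finset.mem_coe.1 (hf2.mapsTo (Finset.mem_coe.2 hy))))

lemma induce_self (G : HCGraph ℕ) : G.induce G.verts = G :=
  HCGraph.ext' (Finset.inter_self _) rfl

lemma induce_induce (G : HCGraph ℕ) (S S' : Finset ℕ) :
    (G.induce S).induce S' = G.induce (S ∩ S') :=
  HCGraph.ext' (Finset.inter_assoc _ _ _) rfl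

lemma eq_induce_of_subset {G H : HCGraph ℕ} (h1 : H.verts ⊆ G.verts) (h2 : H.adj = G.adj) :
    H = G.induce H.verts :=
  HCGraph.ext' (Finset.inter_eq_right.2 h1).symm h2

lemma subG_eq_induce (G : HCGraph ℕ) (v i : ℕ) :
    subG G v i = G.induce (subG G v i).verts :=
  eq_induce_of_subset (subG_subset G v i) (subG_adj G v i)

lemma suffix_concat_iff {a b : List ℕ} {v : ℕ} : a ++ [v] <:+ b ++ [v] ↔ a <:+ b := by
  constructor
  · rintro ⟨t, ht⟩
    rw [← List.append_assoc] at ht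
    exact ⟨t, (List.append_left_inj [v]).1 ht⟩
  · rintro ⟨t, ht⟩
    exact ⟨t, by rw [← List.append_assoc, ht]⟩

lemma getLast?_of_suffix {a b : List ℕ} (h : a <:+ b) (ha : a ≠ []) :
    b.getLast? = a.getLast? := by
  obtain ⟨t, rfl⟩ := h
  rw [List.getLast?_append, List.getLast?_eq_getLast ha]
  rfl

lemma subtree_child_verts {n : ℕ} {G : HCGraph ℕ} {v i : ℕ}
    (hi : i < (nbrList G v).length) {a : List ℕ} (ha : a ∈ (subT n G v i).verts) :
    (subtreeAt (TSAWAux (n+1) G v) [v] (a ++ [v])).verts =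
      ((subtreeAt (TSAWAux n (subG G v i) ((nbrList G v).getD i 0))
        [(nbrList G v).getD i 0] a).verts).image (fun b => b ++ [v]) := by
  have hu : a ++ [v] ∈ (TSAWAux (n+1) G v).verts :=
    mem_TSAWAux_succ.2 (Or.inr ⟨_, mem_treesOf.2 ⟨i, hi, rfl⟩, a, ha, rfl⟩)
  rw [subtreeAt_verts hu, subtreeAt_verts (n := n) ha]
  ext x
  simp only [Finset.mem_filter, Finset.mem_image]
  constructor
  · rintro ⟨hx, hsuf⟩
    rcases mem_TSAWAux_succ.1 hx with rfl | ⟨T, hT, b, hb, rfl⟩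
    · exfalso
      have h1 := hsuf.length_le
      have h2 : 0 < a.length := List.length_pos_iff.2 (subT_getLast ha).1
      simp only [List.length_append, List.length_singleton] at h1
      omega
    · obtain ⟨j, hj, rfl⟩ := mem_treesOf.1 hT
      have hab : a <:+ b := suffix_concat_iff.1 hsuf
      have hji : j = i := subT_index_unique hj hi hb ha
        (getLast?_of_suffix hab (subT_getLast ha).1)
      subst hji
      exact ⟨b, ⟨hb, hab⟩, rfl⟩
  · rintro ⟨b, ⟨hb, hab⟩, rfl⟩
    exact ⟨mem_TSAWAux_succ.2 (Or.inr ⟨_, mem_treesOf.2 ⟨i, hi, rfl⟩, b, hb, rfl⟩),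
      suffix_concat_iff.2 hab⟩

lemma iso_drop {n : ℕ} {G : HCGraph ℕ} {v i : ℕ} (hi : i < (nbrList G v).length)
    {a : List ℕ} (ha : a ∈ (subT n G v i).verts) :
    RootedIso (subtreeAt (TSAWAux (n+1) G v) [v] (a ++ [v])) (a ++ [v])
      (subtreeAt (TSAWAux n (subG G v i) ((nbrList G v).getD i 0))
        [(nbrList G v).getD i 0] a) a := by
  refine ⟨List.dropLast, List.dropLast_concat, ⟨?_, ?_, ?_⟩, ?_⟩
  · intro x hx
    rw [Finset.mem_coe, subtree_child_verts hi ha] at hx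
    obtain ⟨b, hb, rfl⟩ := Finset.mem_image.1 hx
    rw [Finset.mem_coe, List.dropLast_concat]
    exact hb
  · intro x hx y hy hxy
    rw [Finset.mem_coe, subtree_child_verts hi ha] at hx hy
    obtain ⟨b, -, rfl⟩ := Finset.mem_image.1 hx
    obtain ⟨c, -, rfl⟩ := Finset.mem_image.1 hy
    rw [List.dropLast_concat, List.dropLast_concat] at hxy
    rw [hxy]
  · intro b hb
    rw [Finset.mem_coe] at hb
    refine ⟨b ++ [v], ?_, List.dropLast_concat⟩
    rw [Finset.mem_coe, subtree_child_verts hi ha]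
    exact Finset.mem_image.2 ⟨b, hb, rfl⟩
  · intro x hx y hy
    rw [subtree_child_verts hi ha] at hx hy
    obtain ⟨b, hb, rfl⟩ := Finset.mem_image.1 hx
    obtain ⟨c, hc, rfl⟩ := Finset.mem_image.1 hy
    have hbv : b ∈ (subT n G v i).verts := (Finset.mem_filter.1 hb).1
    have hcv : c ∈ (subT n G v i).verts := (Finset.mem_filter.1 hc).1
    rw [List.dropLast_concat, List.dropLast_concat]
    constructor
    · rintro ⟨hne, -, -, hor⟩
      refine ⟨fun h => hne (by rw [h]), hb, hc, ?_⟩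
      rcases hor with h | h
      · left
        show (subT n G v i).adj b c = true
        rw [← adj_lift hi hbv hcv]
        exact h
      · right
        show (subT n G v i).adj c b = true
        rw [← adj_lift hi hcv hbv]
        exact h
    · rintro ⟨hne, -, -, hor⟩
      refine ⟨fun h => hne ((List.append_left_inj [v]).1 h), ?_, ?_, ?_⟩
      · rw [subtree_child_verts hi ha]
        exact Finset.mem_image.2 ⟨b, hb, rfl⟩
      · rw [subtree_child_verts hi ha]
        exact Finset.mem_image.2 ⟨c, hc, rfl⟩
      rcases hor with h | h
      · left
        show (TSAWAux (n+1) G v).adj (b ++ [v]) (c ++ [v]) = true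
        rw [adj_lift hi hbv hcv]
        exact h
      · right
        show (TSAWAux (n+1) G v).adj (c ++ [v]) (b ++ [v]) = true
        rw [adj_lift hi hcv hbv]
        exact h

lemma subtree_iso : ∀ (n : ℕ) (G : HCGraph ℕ) (v : ℕ), G.IsSimple → v ∈ G.verts →
    G.verts.card ≤ n → ∀ u ∈ (TSAWAux n G v).verts,
    ∃ (S : Finset ℕ) (r : ℕ), r ∈ (G.induce S).verts ∧
      RootedIso (subtreeAt (TSAWAux n G v) [v] u) u (TSAW (G.induce S) r) [r] := by
  intro n
  induction n with
  | zero =>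
    intro G v hG hv hcard
    exact absurd (Finset.card_pos.2 ⟨v, hv⟩) (by omega)
  | succ n ih =>
    intro G v hG hv hcard u hu
    rcases mem_TSAWAux_succ.1 hu with rfl | ⟨T, hT, a, ha, rfl⟩
    · refine ⟨G.verts, v, ?_, ?_⟩
      · rw [induce_self]; exact hv
      · have h1 : subtreeAt (TSAWAux (n+1) G v) [v] [v] = TSAWAux (n+1) G v := by
          refine HCGraph.ext' ?_ rfl
          rw [subtreeAt_verts (root_mem_TSAWAux (n+1) G v)]
          exact Finset.filter_true_of_mem fun w hw => suffix_root hw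
        rw [h1, induce_self, ← TSAWAux_eq_TSAW G v hcard]
        exact RootedIso_of_eq rfl
    · obtain ⟨i, hi, rfl⟩ := mem_treesOf.1 hT
      have hvi := subG_root_mem hi
      have hsimple := subG_simple hG v i
      have hcard' : (subG G v i).verts.card ≤ n := by
        have := subG_card hv i; omega
      obtain ⟨S', r', hr', hiso⟩ := ih (subG G v i) ((nbrList G v).getD i 0)
        hsimple hvi hcard' a ha
      refine ⟨(subG G v i).verts ∩ S', r', ?_, ?_⟩
      · rw [← induce_induce, ← subG_eq_induce]
        exact hr'
      · rw [← induce_induce, ← subG_eq_induce]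
        exact RootedIso_trans (iso_drop hi ha) hiso

end Part2

end AuxDev

/-- **Lemma 2.1.** For a finite graph `G` with vertex `v` and a vector of
variables `(λ_u)_{u ∈ V}` there is an assignment of the variables `λ_u` to the vertices of
the self-avoiding walk tree `T_SAW(G,v)` under which the occupation ratio of the tree at
its root equals the occupation ratio of `G` at `v`.  Moreover, every subtree of
`T_SAW(G,v)` hanging below one of its vertices is (as a rooted graph) the self-avoiding
walk tree of an induced subgraph of `G`. -/
theorem ratio_TSAW_eq_ratio (G : HCGraph ℕ) (hG : G.IsSimple) (v : ℕ) (hv : v ∈ G.verts) :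
    (∃ tl : List ℕ → RatField,
      (∀ w ∈ (TSAW G v).verts, ∃ u ∈ G.verts, tl w = Xvar u) ∧
      HCGraph.ratioM (TSAW G v) [v] tl = HCGraph.ratioM G v Xvar) ∧
    (∀ u ∈ (TSAW G v).verts, ∃ (S : Finset ℕ) (r : ℕ), r ∈ (G.induce S).verts ∧
      RootedIso (subtreeAt (TSAW G v) [v] u) u (TSAW (G.induce S) r) [r]) := by
  constructor
  · refine ⟨fun w => Xvar (w.headD 0), ?_, ?_⟩
    · intro w hw
      exact ⟨w.headD 0, TSAWAux_head G.verts.card G v hv w hw, rfl⟩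
    · exact ratio_TSAWAux_eq G.verts.card G v hG hv (le_refl _)
  · intro u hu
    exact subtree_iso G.verts.card G v hG hv (le_refl _) u hu

end
end

section
/- Let λ > 0. Given any sequence (λ_n)_{n≥1} of numbers in (0,λ], there exists a unique starting value w_0 ∈ ℂ for which the orbit (w_n) defined by w_n = f_{λ_n}(w_{n−1}) = λ_n/(1+w_{n−1}) is contained in the open left half-plane {z : Re(z) < 0}. Moreover, this orbit (w_n)_{n≥0} is contained in the real interval (−λ−1, −1). -/
noncomputable section

/-- The orbit of a starting value `w₀` under the non-autonomous dynamical system given by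
the Möbius maps `f_{λ_n}(z) = λ_n/(1+z)`: `w_n = f_{λ_n}(w_{n-1})`. -/
def orbit (lams : ℕ → ℝ) (w0 : ℂ) : ℕ → ℂ
  | 0 => w0
  | n + 1 => (lams (n + 1) : ℂ) / (1 + orbit lams w0 n)

section AuxLHP

variable {lam : ℝ} {lams : ℕ → ℝ} {w0 : ℂ}


def orbitR (lams : ℕ → ℝ) (x0 : ℝ) : ℕ → ℝ
  | 0 => x0
  | n + 1 => lams (n + 1) / (1 + orbitR lams x0 n)


def gmap (μ : ℝ) (x : ℝ) : ℝ := μ / x - 1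


def back (lams : ℕ → ℝ) (n : ℕ) : ℕ → ℝ → ℝ
  | 0 => id
  | N + 1 => if N + 1 ≤ n then id else back lams n N ∘ gmap (lams (N + 1))


lemma back_self (lams : ℕ → ℝ) (n : ℕ) : back lams n n = id := by
  cases n with
  | zero => rfl
  | succ N => rw [back, if_pos le_rfl]


lemma back_succ (lams : ℕ → ℝ) {n N : ℕ} (h : n ≤ N) :
    back lams n (N + 1) = back lams n N ∘ gmap (lams (N + 1)) := by
  rw [back, if_neg (by omega)]


lemma back_peel (lams : ℕ → ℝ) {n N : ℕ} (h : n < N) :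
    back lams n N = gmap (lams (n + 1)) ∘ back lams (n + 1) N := by
  induction N with
  | zero => omega
  | succ N ih =>
    rcases Nat.lt_or_ge n N with h' | h'
    · rw [back_succ lams h'.le, back_succ lams h', ih h']; rfl
    · have : n = N := by omega
      subst this
      rw [back_succ lams le_rfl, back_self, back_self]; rfl


lemma gmap_mem (hlam : 0 < lam) {μ x : ℝ} (hμ : μ ∈ Set.Ioc 0 lam)
    (hx : x ∈ Set.Icc (-lam - 1) (-1)) :
    gmap μ x ∈ Set.Icc (-lam - 1) (-1) := by
  obtain ⟨hμ0, hμl⟩ := hμ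
  obtain ⟨hx1, hx2⟩ := hx
  have hx0 : x < 0 := by linarith
  constructor
  · have : μ / x ≥ -μ := by
      rw [ge_iff_le, neg_le, ← neg_div, div_le_iff_of_neg hx0]
      nlinarith
    simp only [gmap]; linarith
  · have : μ / x ≤ 0 := div_nonpos_iff.2 (Or.inl ⟨hμ0.le, hx0.le⟩)
    simp only [gmap]; linarith


lemma gmap_continuousOn (hlam : 0 < lam) (μ : ℝ) :
    ContinuousOn (gmap μ) (Set.Icc (-lam - 1) (-1)) := by
  apply ContinuousOn.sub _ continuousOn_const
  apply ContinuousOn.div continuousOn_const continuousOn_id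
  intro x hx
  have h1 : x ≤ -1 := hx.2
  intro h; simp only [id] at h; subst h; linarith


lemma back_mem (hlam : 0 < lam) (hl : ∀ n : ℕ, 1 ≤ n → lams n ∈ Set.Ioc 0 lam)
    (n : ℕ) : ∀ N : ℕ, ∀ {x : ℝ}, x ∈ Set.Icc (-lam - 1) (-1) →
      back lams n N x ∈ Set.Icc (-lam - 1) (-1) := by
  intro N
  induction N with
  | zero => intro x hx; exact hx
  | succ N ih =>
    intro x hx
    by_cases h : N + 1 ≤ n
    · rw [back, if_pos h]; exact hx
    · rw [back, if_neg h]
      exact ih (gmap_mem hlam (hl (N + 1) (by omega)) hx)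


lemma back_continuousOn (hlam : 0 < lam) (hl : ∀ n : ℕ, 1 ≤ n → lams n ∈ Set.Ioc 0 lam)
    (n N : ℕ) : ContinuousOn (back lams n N) (Set.Icc (-lam - 1) (-1)) := by
  induction N with
  | zero => exact continuousOn_id
  | succ N ih =>
    by_cases h : N + 1 ≤ n
    · rw [back, if_pos h]; exact continuousOn_id
    · rw [back, if_neg h]
      exact ih.comp (gmap_continuousOn hlam _)
        (fun x hx => gmap_mem hlam (hl (N + 1) (by omega)) hx)


lemma orbitR_back (hlam : 0 < lam) (hl : ∀ n : ℕ, 1 ≤ n → lams n ∈ Set.Ioc 0 lam)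
    (N : ℕ) {x : ℝ} (hx : x ∈ Set.Icc (-lam - 1) (-1)) :
    ∀ n : ℕ, n ≤ N → orbitR lams (back lams 0 N x) n = back lams n N x := by
  intro n
  induction n with
  | zero => intro _; rfl
  | succ n ih =>
    intro hn
    have hnN : n < N := by omega
    have hy : back lams (n + 1) N x ∈ Set.Icc (-lam - 1) (-1) := back_mem hlam hl _ N hx
    set y := back lams (n + 1) N x with hydef
    have hy0 : y ≠ 0 := by
      have := hy.2; intro h; rw [h] at this; linarith
    have hμ : lams (n + 1) ≠ 0 := ne_of_gt (hl (n + 1) (by omega)).1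
    rw [orbitR, ih hnN.le, back_peel lams hnN]
    show lams (n + 1) / (1 + gmap (lams (n + 1)) y) = y
    rw [gmap]
    have : 1 + (lams (n + 1) / y - 1) = lams (n + 1) / y := by ring
    rw [this, div_div_eq_mul_div, mul_comm, mul_div_assoc, div_self hμ, mul_one]


lemma exists_orbitR_mem (hlam : 0 < lam) (hl : ∀ n : ℕ, 1 ≤ n → lams n ∈ Set.Ioc 0 lam) :
    ∃ x0 : ℝ, ∀ n : ℕ, orbitR lams x0 n ∈ Set.Icc (-lam - 1) (-1) := by
  set I := Set.Icc (-lam - 1) (-1) with hI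
  have hIne : I.Nonempty := Set.nonempty_Icc.2 (by linarith)
  have hIc : IsCompact I := isCompact_Icc
  set S : ℕ → Set ℝ := fun N => back lams 0 N '' I with hS
  have hSc : ∀ N, IsCompact (S N) :=
    fun N => hIc.image_of_continuousOn (back_continuousOn hlam hl 0 N)
  have hSne : ∀ N, (S N).Nonempty := fun N => hIne.image _
  have hSnest : ∀ N, S (N + 1) ⊆ S N := by
    intro N
    rw [hS]
    simp only
    rw [back_succ lams (Nat.zero_le N), Set.image_comp]
    exact Set.image_mono
      (Set.image_subset_iff.2 fun x hx => gmap_mem hlam (hl (N + 1) (by omega)) hx)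
  have hmain := IsCompact.nonempty_iInter_of_sequence_nonempty_isCompact_isClosed S
    hSnest hSne (hSc 0) (fun N => (hSc N).isClosed)
  obtain ⟨x0, hx0⟩ := hmain
  refine ⟨x0, fun n => ?_⟩
  have hx0n : x0 ∈ S n := Set.mem_iInter.1 hx0 n
  obtain ⟨x, hx, hxe⟩ := hx0n
  have := orbitR_back hlam hl n hx n le_rfl
  rw [hxe] at this
  rw [this, back_self]
  exact hx


lemma orbit_ofReal (lams : ℕ → ℝ) (x0 : ℝ) (n : ℕ) :
    orbit lams (x0 : ℂ) n = ((orbitR lams x0 n : ℝ) : ℂ) := by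
  induction n with
  | zero => rfl
  | succ n ih => rw [orbit, orbitR, ih]; push_cast; ring_nf


lemma re_succ (lams : ℕ → ℝ) (w0 : ℂ) (n : ℕ) :
    (1 + orbit lams w0 (n + 1)).re =
      lams (n + 1) * (1 + orbit lams w0 n).re / Complex.normSq (1 + orbit lams w0 n) + 1 := by
  rw [orbit]
  simp [Complex.add_re, Complex.div_re]
  ring


lemma im_succ (lams : ℕ → ℝ) (w0 : ℂ) (n : ℕ) :
    (orbit lams w0 (n + 1)).im =
      -(lams (n + 1) * (orbit lams w0 n).im) / Complex.normSq (1 + orbit lams w0 n) := by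
  rw [orbit]
  simp [Complex.div_im]
  ring


lemma orbit_re_neg_one (hlam : 0 < lam) (hl : ∀ n : ℕ, 1 ≤ n → lams n ∈ Set.Ioc 0 lam)
    (hw : ∀ n : ℕ, (orbit lams w0 n).re < 0) (n : ℕ) :
    (1 + orbit lams w0 n).re < 0 ∧ 0 < Complex.normSq (1 + orbit lams w0 n) := by
  have hμ : 0 < lams (n + 1) := (hl (n + 1) (by omega)).1
  have h1 := hw (n + 1)
  rw [show orbit lams w0 (n+1) = (lams (n+1) : ℂ) / (1 + orbit lams w0 n) from rfl] at h1
  set v := 1 + orbit lams w0 n with hv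
  rw [Complex.div_re] at h1
  simp only [Complex.ofReal_re, Complex.ofReal_im, zero_mul, zero_div, add_zero] at h1
  have hS0 : Complex.normSq v ≠ 0 := by
    intro h; rw [h] at h1; simp at h1
  have hS : 0 < Complex.normSq v := lt_of_le_of_ne (Complex.normSq_nonneg v) (Ne.symm hS0)
  refine ⟨?_, hS⟩
  by_contra h
  push_neg at h
  have : 0 ≤ lams (n + 1) * v.re / Complex.normSq v :=
    div_nonneg (mul_nonneg hμ.le h) hS.le
  linarith


lemma orbit_key (hlam : 0 < lam) (hl : ∀ n : ℕ, 1 ≤ n → lams n ∈ Set.Ioc 0 lam)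
    (hw : ∀ n : ℕ, (orbit lams w0 n).re < 0) (n : ℕ) :
    Complex.normSq (1 + orbit lams w0 n) < lams (n + 1) * (-(1 + orbit lams w0 n).re) ∧
      -(1 + orbit lams w0 n).re < lams (n + 1) := by
  obtain ⟨hvre, hS⟩ := orbit_re_neg_one hlam hl hw n
  obtain ⟨hvre', _⟩ := orbit_re_neg_one hlam hl hw (n + 1)
  rw [re_succ] at hvre'
  set v := 1 + orbit lams w0 n with hv
  set S := Complex.normSq v with hSd
  have h2 : lams (n + 1) * v.re / S < -1 := by linarith
  have h3 : lams (n + 1) * v.re < -S := by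
    have := (div_lt_iff₀ hS).1 h2; linarith
  have key1 : S < lams (n + 1) * (-v.re) := by linarith
  refine ⟨key1, ?_⟩
  have hsq : v.re ^ 2 ≤ S := by
    rw [hSd, Complex.normSq_apply]; nlinarith [sq_nonneg v.im]
  nlinarith


lemma ratio_growth {lam μ Y A S : ℝ} (hlam : 0 < lam) (hA : 0 < A) (hS : 0 < S)
    (hY : 0 ≤ Y) (h1 : S < μ * A) (h2 : μ * A < (1 + lam) * S) :
    ((1 + lam) / lam) * (Y / A) ≤ (μ * Y / S) / (μ * A / S - 1) := by
  have hd : 0 < μ * A / S - 1 := by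
    rw [sub_pos, lt_div_iff₀ hS]; linarith
  rw [div_mul_div_comm, div_le_div_iff₀ (by positivity) hd]
  have e1 : μ * A / S - 1 = (μ * A - S) / S := by field_simp
  rw [e1]
  rw [← mul_div_assoc, div_mul_eq_mul_div, div_le_div_iff₀ hS hS]
  nlinarith [mul_le_mul_of_nonneg_left h2.le hY]


lemma orbit_im_eq_zero (hlam : 0 < lam) (hl : ∀ n : ℕ, 1 ≤ n → lams n ∈ Set.Ioc 0 lam)
    (hw : ∀ n : ℕ, (orbit lams w0 n).re < 0) : ∀ n : ℕ, (orbit lams w0 n).im = 0 := by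
  -- abbreviations
  set W := orbit lams w0 with hW
  set A : ℕ → ℝ := fun n => -(1 + W n).re with hA
  set S : ℕ → ℝ := fun n => Complex.normSq (1 + W n) with hS
  have hApos : ∀ n, 0 < A n := by
    intro n; have := (orbit_re_neg_one hlam hl hw n).1; simp only [hA]; linarith
  have hSpos : ∀ n, 0 < S n := fun n => (orbit_re_neg_one hlam hl hw n).2
  have hμpos : ∀ n : ℕ, 0 < lams (n + 1) := fun n => (hl (n + 1) (by omega)).1
  have hμle : ∀ n : ℕ, lams (n + 1) ≤ lam := fun n => (hl (n + 1) (by omega)).2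
  have hF2 : ∀ n, S n < lams (n + 1) * A n := fun n => (orbit_key hlam hl hw n).1
  have hF3 : ∀ n, A n < lams (n + 1) := fun n => (orbit_key hlam hl hw n).2
  have hAsucc : ∀ n, A (n + 1) = lams (n + 1) * A n / S n - 1 := by
    intro n
    simp only [hA, hS, hW]
    rw [re_succ lams w0 n]
    field_simp
    ring
  have hF4 : ∀ n, lams (n + 1) * A n < (1 + lam) * S n := by
    intro n
    have h1 : A (n + 1) < lam := lt_of_lt_of_le (hF3 (n + 1)) (hμle (n + 1))
    rw [hAsucc n] at h1
    have := (hSpos n)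
    rw [div_sub' this.ne', div_lt_iff₀ this] at h1
    linarith
  -- first: the starting imaginary part is zero
  have him0 : (W 0).im = 0 := by
    by_contra hy0
    set Y : ℕ → ℝ := fun n => |(W n).im| with hY
    have hYsucc : ∀ n, Y (n + 1) = lams (n + 1) * Y n / S n := by
      intro n
      simp only [hY, hS, hW]
      rw [im_succ lams w0 n, abs_div, abs_neg, abs_mul, abs_of_pos (hμpos n),
        abs_of_pos (hSpos n)]
    have hYne : ∀ n, 0 < Y n := by
      intro n
      induction n with
      | zero => exact abs_pos.2 hy0
      | succ n ih =>
        rw [hYsucc n]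
        exact div_pos (mul_pos (hμpos n) ih) (hSpos n)
    have hYlt : ∀ n, Y n < lam := by
      intro n
      have h1 : Y n ^ 2 ≤ S n := by
        simp only [hY, hS, hW, Complex.normSq_apply, Complex.add_im, Complex.one_im, zero_add,
          sq_abs]
        nlinarith [sq_nonneg (1 + W n).re]
      nlinarith [hF2 n, hF3 n, hμle n, hμpos n, hApos n, hYne n]
    have hρlt : ∀ n, Y n / A n < lam := by
      intro n
      have h1 : Y n / A n ≤ lams (n + 1) * Y n / S n := by
        rw [div_le_div_iff₀ (hApos n) (hSpos n)]
        nlinarith [hF2 n, (hYne n).le]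
      rw [← hYsucc n] at h1
      exact lt_of_le_of_lt h1 (hYlt (n + 1))
    have hgrow : ∀ n, ((1 + lam) / lam) * (Y n / A n) ≤ Y (n + 1) / A (n + 1) := by
      intro n
      rw [hYsucc n, hAsucc n]
      exact ratio_growth hlam (hApos n) (hSpos n) (hYne n).le (hF2 n) (hF4 n)
    have hind : ∀ n, ((1 + lam) / lam) ^ n * (Y 0 / A 0) ≤ Y n / A n := by
      intro n
      induction n with
      | zero => simp
      | succ n ih =>
        calc ((1 + lam) / lam) ^ (n + 1) * (Y 0 / A 0)
            = ((1 + lam) / lam) * (((1 + lam) / lam) ^ n * (Y 0 / A 0)) := by ring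
          _ ≤ ((1 + lam) / lam) * (Y n / A n) := by
              apply mul_le_mul_of_nonneg_left ih (by positivity)
          _ ≤ Y (n + 1) / A (n + 1) := hgrow n
    have hc : 1 < (1 + lam) / lam := by
      rw [lt_div_iff₀ hlam]; linarith
    have hρ0 : 0 < Y 0 / A 0 := div_pos (hYne 0) (hApos 0)
    obtain ⟨n, hn⟩ := pow_unbounded_of_one_lt (lam / (Y 0 / A 0)) hc
    have : lam < ((1 + lam) / lam) ^ n * (Y 0 / A 0) := by
      rw [div_lt_iff₀ hρ0] at hn; linarith
    linarith [hind n, hρlt n]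
  -- induct forward
  intro n
  induction n with
  | zero => exact him0
  | succ n ih =>
    simp only [hW] at ih ⊢
    rw [im_succ lams w0 n, ih]
    simp


lemma ratio_step {lam μ a a' : ℝ} (hlam : 0 < lam) (ha' : 0 < a') (hle : a' ≤ a)
    (haμ : a < μ) (hb : μ / a - 1 ≤ lam) :
    1 + (1 + 1 / lam) * (a / a' - 1) ≤ (μ / a' - 1) / (μ / a - 1) := by
  have ha : 0 < a := lt_of_lt_of_le ha' hle
  have hb0 : 0 < μ / a - 1 := by rw [sub_pos, lt_div_iff₀ ha]; linarith
  have hμa : 0 ≤ lam * a - (μ - a) := by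
    rw [sub_le_iff_le_add, div_le_iff₀ ha] at hb; nlinarith
  have hμa0 : 0 < μ - a := sub_pos.2 haμ
  have hkey : 0 ≤ (a - a') * (lam * a - (μ - a)) :=
    mul_nonneg (by linarith) hμa
  have E1 : (μ / a' - 1) / (μ / a - 1) = (a * (μ - a')) / (a' * (μ - a)) := by
    rw [div_eq_div_iff hb0.ne' (mul_pos ha' hμa0).ne']
    field_simp
  rw [E1, le_div_iff₀ (mul_pos ha' hμa0)]
  have hgoal : (lam * a' + (lam + 1) * (a - a')) * (μ - a) ≤ lam * (a * (μ - a')) := by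
    nlinarith [hkey]
  have hexp : (1 + (1 + 1 / lam) * (a / a' - 1)) * (a' * (μ - a)) * lam
      = (lam * a' + (lam + 1) * (a - a')) * (μ - a) := by
    field_simp
  have := hgoal
  rw [← hexp] at this
  have hl2 := (mul_le_mul_iff_of_pos_right hlam).1 (by linarith : (1 + (1 + 1 / lam) * (a / a' - 1)) * (a' * (μ - a)) * lam ≤ a * (μ - a') * lam)
  linarith


lemma orbit_unique (hlam : 0 < lam) (hl : ∀ n : ℕ, 1 ≤ n → lams n ∈ Set.Ioc 0 lam)
    {w0 w0' : ℂ} (hw : ∀ n : ℕ, (orbit lams w0 n).re < 0)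
    (hw' : ∀ n : ℕ, (orbit lams w0' n).re < 0) : w0 = w0' := by
  have him := orbit_im_eq_zero hlam hl hw
  have him' := orbit_im_eq_zero hlam hl hw'
  have hμpos : ∀ n : ℕ, 0 < lams (n + 1) := fun n => (hl (n + 1) (by omega)).1
  have hμle : ∀ n : ℕ, lams (n + 1) ≤ lam := fun n => (hl (n + 1) (by omega)).2
  set A : ℕ → ℝ := fun n => -(1 + orbit lams w0 n).re with hA
  set A' : ℕ → ℝ := fun n => -(1 + orbit lams w0' n).re with hA'
  have hApos : ∀ n, 0 < A n := by
    intro n; have := (orbit_re_neg_one hlam hl hw n).1; simp only [hA]; linarith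
  have hA'pos : ∀ n, 0 < A' n := by
    intro n; have := (orbit_re_neg_one hlam hl hw' n).1; simp only [hA']; linarith
  have hAlt : ∀ n, A n < lams (n + 1) := fun n => (orbit_key hlam hl hw n).2
  have hA'lt : ∀ n, A' n < lams (n + 1) := fun n => (orbit_key hlam hl hw' n).2
  -- S = A ^ 2 for real orbits
  have hSA : ∀ n, Complex.normSq (1 + orbit lams w0 n) = A n ^ 2 := by
    intro n
    rw [Complex.normSq_apply]
    simp only [Complex.add_im, Complex.one_im, zero_add, him n, hA]
    ring
  have hSA' : ∀ n, Complex.normSq (1 + orbit lams w0' n) = A' n ^ 2 := by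
    intro n
    rw [Complex.normSq_apply]
    simp only [Complex.add_im, Complex.one_im, zero_add, him' n, hA']
    ring
  have hrec : ∀ n, A (n + 1) = lams (n + 1) / A n - 1 := by
    intro n
    simp only [hA]
    rw [re_succ lams w0 n, hSA n]
    have h : lams (n + 1) * (1 + orbit lams w0 n).re / A n ^ 2
        = -(lams (n + 1) / A n) := by
      rw [show (1 + orbit lams w0 n).re = -A n from by simp [hA]]
      field_simp [(hApos n).ne']
    rw [h]; ring
  have hrec' : ∀ n, A' (n + 1) = lams (n + 1) / A' n - 1 := by
    intro n
    simp only [hA']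
    rw [re_succ lams w0' n, hSA' n]
    have h : lams (n + 1) * (1 + orbit lams w0' n).re / A' n ^ 2
        = -(lams (n + 1) / A' n) := by
      rw [show (1 + orbit lams w0' n).re = -A' n from by simp [hA']]
      field_simp [(hA'pos n).ne']
    rw [h]; ring
  have hAle : ∀ n, A (n + 1) ≤ lam := fun n => le_trans (hAlt (n + 1)).le (hμle (n + 1))
  have hA'le : ∀ n, A' (n + 1) ≤ lam := fun n => le_trans (hA'lt (n + 1)).le (hμle (n + 1))
  by_contra hne
  have hA0 : A 0 ≠ A' 0 := by
    intro h
    apply hne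
    apply Complex.ext
    · have h0 : A 0 = -(1 + w0).re := rfl
      have h0' : A' 0 = -(1 + w0').re := rfl
      rw [h0, h0'] at h
      simp only [Complex.add_re, Complex.one_re] at h
      linarith
    · exact (him 0).trans (him' 0).symm
  set q : ℕ → ℝ := fun n => max (A n / A' n) (A' n / A n) with hq
  have hqlt : ∀ n, q n < 1 + lam := by
    intro n
    have e1 : lams (n + 1) ≤ (1 + lam) * A' n := by
      have h1 := hA'le n
      rw [hrec' n] at h1
      have h2 : lams (n + 1) / A' n ≤ 1 + lam := by linarith
      have h3 := (div_le_iff₀ (hA'pos n)).1 h2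
      linarith
    have e2 : lams (n + 1) ≤ (1 + lam) * A n := by
      have h1 := hAle n
      rw [hrec n] at h1
      have h2 : lams (n + 1) / A n ≤ 1 + lam := by linarith
      have h3 := (div_le_iff₀ (hApos n)).1 h2
      linarith
    apply max_lt
    · rw [div_lt_iff₀ (hA'pos n)]
      calc A n < lams (n + 1) := hAlt n
        _ ≤ (1 + lam) * A' n := e1
    · rw [div_lt_iff₀ (hApos n)]
      calc A' n < lams (n + 1) := hA'lt n
        _ ≤ (1 + lam) * A n := e2
  have hstep : ∀ n, 1 + (1 + 1 / lam) * (q n - 1) ≤ q (n + 1) := by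
    intro n
    rcases le_total (A' n) (A n) with h | h
    · have hqn : q n = A n / A' n := by
        apply max_eq_left
        rw [div_le_div_iff₀ (hApos n) (hA'pos n)]
        nlinarith [hApos n, hA'pos n]
      have hmono : A (n + 1) ≤ A' (n + 1) := by
        rw [hrec n, hrec' n]
        have := div_le_div_of_nonneg_left (hμpos n).le (hA'pos n) h
        linarith
      have hqn1 : q (n + 1) = A' (n + 1) / A (n + 1) := by
        apply max_eq_right
        rw [div_le_div_iff₀ (hA'pos (n + 1)) (hApos (n + 1))]
        nlinarith [hApos (n + 1), hA'pos (n + 1)]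
      rw [hqn, hqn1, hrec n, hrec' n]
      exact ratio_step hlam (hA'pos n) h (hAlt n) (by rw [← hrec n]; exact hAle n)
    · have hqn : q n = A' n / A n := by
        apply max_eq_right
        rw [div_le_div_iff₀ (hA'pos n) (hApos n)]
        nlinarith [hApos n, hA'pos n]
      have hmono : A' (n + 1) ≤ A (n + 1) := by
        rw [hrec n, hrec' n]
        have := div_le_div_of_nonneg_left (hμpos n).le (hApos n) h
        linarith
      have hqn1 : q (n + 1) = A (n + 1) / A' (n + 1) := by
        apply max_eq_left
        rw [div_le_div_iff₀ (hApos (n + 1)) (hA'pos (n + 1))]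
        nlinarith [hApos (n + 1), hA'pos (n + 1)]
      rw [hqn, hqn1, hrec n, hrec' n]
      exact ratio_step hlam (hApos n) h (hA'lt n) (by rw [← hrec' n]; exact hA'le n)
  have hq0 : 1 < q 0 := by
    rcases hA0.lt_or_gt with h | h
    · calc (1:ℝ) < A' 0 / A 0 := (one_lt_div (hApos 0)).2 h
        _ ≤ q 0 := le_max_right _ _
    · calc (1:ℝ) < A 0 / A' 0 := (one_lt_div (hA'pos 0)).2 h
        _ ≤ q 0 := le_max_left _ _
  have hcpos : (0:ℝ) < 1 + 1 / lam := by positivity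
  have hind : ∀ n, 1 + (1 + 1 / lam) ^ n * (q 0 - 1) ≤ q n := by
    intro n
    induction n with
    | zero => simp
    | succ n ih =>
      have h1 : (1 + 1 / lam) ^ n * (q 0 - 1) ≤ q n - 1 := by linarith
      have h2 := mul_le_mul_of_nonneg_left h1 hcpos.le
      have h3 := hstep n
      rw [pow_succ]
      nlinarith
  have hc1 : 1 < 1 + 1 / lam := by
    have : (0:ℝ) < 1 / lam := by positivity
    linarith
  obtain ⟨n, hn⟩ := pow_unbounded_of_one_lt (lam / (q 0 - 1)) hc1
  have hq01 : 0 < q 0 - 1 := by linarith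
  have : lam < (1 + 1 / lam) ^ n * (q 0 - 1) := by
    rw [div_lt_iff₀ hq01] at hn; linarith
  linarith [hind n, hqlt n]


end AuxLHP

/-- **Lemma 3.3.** For `λ > 0` and a sequence `(λ_n)` in `(0,λ]`, there is
a unique starting value `w₀ ∈ ℂ` whose orbit under the maps `f_{λ_n}(z) = λ_n/(1+z)` stays
in the open left half-plane; moreover this orbit is contained in the real interval
`(−λ−1, −1)`. -/
theorem unique_left_half_plane_orbit (lam : ℝ) (hlam : 0 < lam) (lams : ℕ → ℝ)
    (hl : ∀ n : ℕ, 1 ≤ n → lams n ∈ Set.Ioc 0 lam) :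
    (∃! w0 : ℂ, ∀ n : ℕ, (orbit lams w0 n).re < 0) ∧
    ∀ w0 : ℂ, (∀ n : ℕ, (orbit lams w0 n).re < 0) →
      ∀ n : ℕ, (orbit lams w0 n).im = 0 ∧
        (orbit lams w0 n).re ∈ Set.Ioo (-lam - 1) (-1) := by
  constructor
  · obtain ⟨x0, hx0⟩ := exists_orbitR_mem hlam hl
    have hcond : ∀ n : ℕ, (orbit lams (x0 : ℂ) n).re < 0 := by
      intro n
      rw [orbit_ofReal]
      simp only [Complex.ofReal_re]
      have := (hx0 n).2
      linarith
    exact ⟨(x0 : ℂ), hcond, fun y hy => orbit_unique hlam hl hy hcond⟩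
  · intro w0 hw n
    refine ⟨orbit_im_eq_zero hlam hl hw n, ?_, ?_⟩
    · have h1 := (orbit_key hlam hl hw n).2
      have h2 := (hl (n + 1) (by omega)).2
      simp only [Complex.add_re, Complex.one_re] at h1
      linarith
    · have h := (orbit_re_neg_one hlam hl hw n).1
      simp only [Complex.add_re, Complex.one_re] at h
      linarith

end
end

section
/- Given λ > 0, C > 0 and α ∈ (0,1), there exists C' > 0 such that the following holds: for any two sequences (λ_n) and (λ̂_n) in (0,λ] satisfying |λ_n − λ̂_n| < C·α^n for all n ∈ ℕ, the associated orbits (w_n) and (ŵ_n) (the unique orbits under z ↦ λ_n/(1+z), respectively z ↦ λ̂_n/(1+z), that remain in the left half-plane) satisfy |w_n − ŵ_n| ≤ C'·α^n for all n ∈ ℕ. -/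
noncomputable section

lemma geom_bound (r : ℝ) (h0 : 0 ≤ r) (h1 : r < 1) (n : ℕ) :
    ∑ i ∈ Finset.range n, r ^ i ≤ (1 - r)⁻¹ := by
  have h2 : 0 < 1 - r := by linarith
  rw [inv_eq_one_div, le_div_iff₀ h2]
  have hm := geom_sum_mul r n
  have hp : 0 ≤ r ^ n := pow_nonneg h0 n
  nlinarith [hm]

lemma step_bound (a b : ℝ) (u v x y : ℂ) (ha : 0 < a) (hb : 0 < b)
    (hu : 1 ≤ ‖u‖) (hv : 1 ≤ ‖v‖)
    (hx : x = (a : ℂ) / u - 1) (hy : y = (b : ℂ) / v - 1) :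
    ‖x - y‖ ≤ |a - b| + Real.sqrt (a * b) / (‖u‖ * ‖v‖) * ‖u - v‖ := by
  have hu0 : u ≠ 0 := by intro h; rw [h] at hu; simp at hu; linarith
  have hv0 : v ≠ 0 := by intro h; rw [h] at hv; simp at hv; linarith
  have hupos : (0:ℝ) < ‖u‖ := by linarith
  have hvpos : (0:ℝ) < ‖v‖ := by linarith
  rcases le_total a b with hab | hab
  · have hid : x - y = ((a - b : ℝ) : ℂ) / v - (a : ℂ) * (u - v) / (u * v) := by
      rw [hx, hy]; field_simp; push_cast; ring
    have hasq : a ≤ Real.sqrt (a * b) := by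
      calc a = Real.sqrt (a * a) := (Real.sqrt_mul_self ha.le).symm
        _ ≤ Real.sqrt (a * b) := Real.sqrt_le_sqrt (by nlinarith)
    calc ‖x - y‖ = ‖((a - b : ℝ) : ℂ) / v - (a : ℂ) * (u - v) / (u * v)‖ := by rw [hid]
      _ ≤ ‖((a - b : ℝ) : ℂ) / v‖ + ‖(a : ℂ) * (u - v) / (u * v)‖ := norm_sub_le _ _
      _ = |a - b| / ‖v‖ + a / (‖u‖ * ‖v‖) * ‖u - v‖ := by
          rw [norm_div, norm_div, norm_mul, norm_mul, Complex.norm_real, Complex.norm_real,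
            Real.norm_eq_abs, Real.norm_eq_abs, abs_of_pos ha]
          ring
      _ ≤ |a - b| + Real.sqrt (a * b) / (‖u‖ * ‖v‖) * ‖u - v‖ := by
          gcongr
          · exact div_le_self (abs_nonneg _) hv
  · have hid : x - y = ((a - b : ℝ) : ℂ) / u - (b : ℂ) * (u - v) / (u * v) := by
      rw [hx, hy]; field_simp; push_cast; ring
    have hbsq : b ≤ Real.sqrt (a * b) := by
      calc b = Real.sqrt (b * b) := (Real.sqrt_mul_self hb.le).symm
        _ ≤ Real.sqrt (a * b) := Real.sqrt_le_sqrt (by nlinarith)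
    calc ‖x - y‖ = ‖((a - b : ℝ) : ℂ) / u - (b : ℂ) * (u - v) / (u * v)‖ := by rw [hid]
      _ ≤ ‖((a - b : ℝ) : ℂ) / u‖ + ‖(b : ℂ) * (u - v) / (u * v)‖ := norm_sub_le _ _
      _ = |a - b| / ‖u‖ + b / (‖u‖ * ‖v‖) * ‖u - v‖ := by
          rw [norm_div, norm_div, norm_mul, norm_mul, Complex.norm_real, Complex.norm_real,
            Real.norm_eq_abs, Real.norm_eq_abs, abs_of_pos hb]
          ring
      _ ≤ |a - b| + Real.sqrt (a * b) / (‖u‖ * ‖v‖) * ‖u - v‖ := by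
          gcongr
          · exact div_le_self (abs_nonneg _) hu

lemma orbit_re_neg (lam : ℝ) (lams : ℕ → ℝ)
    (hmem : ∀ n : ℕ, 1 ≤ n → lams n ∈ Set.Ioc 0 lam) (w0 : ℂ)
    (hw : ∀ n : ℕ, (orbit lams w0 n).re < 0) (k : ℕ) :
    (1 + orbit lams w0 k).re < 0 := by
  have h := hw (k + 1)
  have horb : orbit lams w0 (k+1) = (lams (k+1) : ℂ) / (1 + orbit lams w0 k) := rfl
  rw [horb] at h
  rcases eq_or_ne (1 + orbit lams w0 k) 0 with h0 | h0
  · rw [h0, div_zero] at h; simp at h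
  · have hns : 0 < Complex.normSq (1 + orbit lams w0 k) := Complex.normSq_pos.mpr h0
    have hre : ((lams (k+1) : ℂ) / (1 + orbit lams w0 k)).re
        = lams (k+1) * (1 + orbit lams w0 k).re / Complex.normSq (1 + orbit lams w0 k) := by
      rw [Complex.div_re]; simp
    rw [hre] at h
    have hl := (hmem (k+1) (by omega)).1
    by_contra hcon
    push_neg at hcon
    have : 0 ≤ lams (k+1) * (1 + orbit lams w0 k).re / Complex.normSq (1 + orbit lams w0 k) :=
      div_nonneg (mul_nonneg hl.le hcon) hns.le
    linarith

lemma orbit_props (lam : ℝ) (lams : ℕ → ℝ)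
    (hmem : ∀ n : ℕ, 1 ≤ n → lams n ∈ Set.Ioc 0 lam) (w0 : ℂ)
    (hw : ∀ n : ℕ, (orbit lams w0 n).re < 0) (k : ℕ) :
    0 < ‖1 + orbit lams w0 k‖ ∧
      1 < ‖orbit lams w0 k‖ ∧ ‖orbit lams w0 k‖ ≤ 1 + lam ∧
      ‖orbit lams w0 (k+1)‖ * ‖1 + orbit lams w0 k‖ = lams (k+1) ∧
      ‖1 + orbit lams w0 k‖ ^ 2 + 1 ≤ ‖orbit lams w0 k‖ ^ 2 := by
  have hre := orbit_re_neg lam lams hmem w0 hw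
  have hne : ∀ j, (1 + orbit lams w0 j) ≠ 0 := by
    intro j h0
    have := hre j
    rw [h0] at this; simp at this
  have hspos : ∀ j, 0 < ‖1 + orbit lams w0 j‖ := fun j => norm_pos_iff.mpr (hne j)
  have hwre : ∀ j, (orbit lams w0 j).re < -1 := by
    intro j; have := hre j; simp [Complex.add_re] at this; linarith
  have htlow : ∀ j, 1 < ‖orbit lams w0 j‖ := by
    intro j
    have h1 := hwre j
    have h2 : |(orbit lams w0 j).re| ≤ ‖orbit lams w0 j‖ := Complex.abs_re_le_norm _
    have : 1 < |(orbit lams w0 j).re| := by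
      rw [abs_of_neg (by linarith)]; linarith
    linarith
  have hts : ∀ j, ‖orbit lams w0 (j+1)‖ * ‖1 + orbit lams w0 j‖ = lams (j+1) := by
    intro j
    have horb : orbit lams w0 (j+1) = (lams (j+1) : ℂ) / (1 + orbit lams w0 j) := rfl
    rw [horb, norm_div, Complex.norm_real, Real.norm_eq_abs,
      abs_of_pos (hmem (j+1) (by omega)).1, div_mul_cancel₀ _ (hspos j).ne']
  have hslt : ∀ j, ‖1 + orbit lams w0 j‖ < lams (j+1) := by
    intro j
    have h := hwre (j+1)
    have horb : orbit lams w0 (j+1) = (lams (j+1) : ℂ) / (1 + orbit lams w0 j) := rfl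
    rw [horb] at h
    have hns : 0 < Complex.normSq (1 + orbit lams w0 j) := Complex.normSq_pos.mpr (hne j)
    have hre2 : ((lams (j+1) : ℂ) / (1 + orbit lams w0 j)).re
        = lams (j+1) * (1 + orbit lams w0 j).re / Complex.normSq (1 + orbit lams w0 j) := by
      rw [Complex.div_re]; simp
    rw [hre2] at h
    rw [div_lt_iff₀ hns] at h
    have hre_le : -(1 + orbit lams w0 j).re ≤ ‖1 + orbit lams w0 j‖ := by
      have h3 := Complex.abs_re_le_norm (1 + orbit lams w0 j)
      have h2 : -(1 + orbit lams w0 j).re ≤ |(1 + orbit lams w0 j).re| := neg_le_abs _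
      calc -(1 + orbit lams w0 j).re ≤ |(1 + orbit lams w0 j).re| := h2
        _ ≤ ‖1 + orbit lams w0 j‖ := h3
    have hsq : ‖1 + orbit lams w0 j‖ ^ 2 = Complex.normSq (1 + orbit lams w0 j) := by
      rw [← Complex.sq_norm]
    nlinarith [hspos j, (hmem (j+1) (by omega)).1]
  have htup : ∀ j, ‖orbit lams w0 j‖ ≤ 1 + lam := by
    intro j
    have h4 : ‖orbit lams w0 j‖ ≤ ‖1 + orbit lams w0 j‖ + 1 := by
      calc ‖orbit lams w0 j‖ = ‖(1 + orbit lams w0 j) - 1‖ := by ring_nf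
        _ ≤ ‖1 + orbit lams w0 j‖ + ‖(1:ℂ)‖ := norm_sub_le _ _
        _ = ‖1 + orbit lams w0 j‖ + 1 := by simp
    have h5 := hslt j
    have h6 := (hmem (j+1) (by omega)).2
    linarith
  have hsqr : ∀ j, ‖1 + orbit lams w0 j‖ ^ 2 + 1 ≤ ‖orbit lams w0 j‖ ^ 2 := by
    intro j
    have h1 : ‖1 + orbit lams w0 j‖ ^ 2 = Complex.normSq (1 + orbit lams w0 j) := by
      rw [← Complex.sq_norm]
    have h2 : ‖orbit lams w0 j‖ ^ 2 = Complex.normSq (orbit lams w0 j) := by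
      rw [← Complex.sq_norm]
    have h3 : Complex.normSq (1 + orbit lams w0 j)
        = Complex.normSq (orbit lams w0 j) + 2 * (orbit lams w0 j).re + 1 := by
      simp [Complex.normSq_apply, Complex.add_re, Complex.add_im]
      ring
    have := hwre j
    nlinarith
  exact ⟨hspos k, htlow k, htup k, hts k, hsqr k⟩

/-- **Lemma 3.4.** Given `λ > 0`, `C > 0` and `α ∈ (0,1)` there is `C' > 0`
such that for any two sequences `(λ_n)`, `(λ̂_n)` in `(0,λ]` with `|λ_n − λ̂_n| < C·αⁿ`
for all `n ≥ 1`, the associated orbits that stay in the left half-plane satisfy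
`|w_n − ŵ_n| ≤ C'·αⁿ` for all `n`. -/
theorem close_lams_close_orbits (lam C α : ℝ) (hlam : 0 < lam) (hC : 0 < C)
    (hα : α ∈ Set.Ioo (0 : ℝ) 1) :
    ∃ C' : ℝ, 0 < C' ∧ ∀ lams lams' : ℕ → ℝ,
      (∀ n : ℕ, 1 ≤ n → lams n ∈ Set.Ioc 0 lam) →
      (∀ n : ℕ, 1 ≤ n → lams' n ∈ Set.Ioc 0 lam) →
      (∀ n : ℕ, 1 ≤ n → |lams n - lams' n| < C * α ^ n) →
      ∀ w0 w0' : ℂ,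
        (∀ n : ℕ, (orbit lams w0 n).re < 0) →
        (∀ n : ℕ, (orbit lams' w0' n).re < 0) →
        ∀ n : ℕ, ‖orbit lams w0 n - orbit lams' w0' n‖ ≤ C' * α ^ n := by

  obtain ⟨hα0, hα1⟩ := hα
  have hlam1 : (0:ℝ) < 1 + lam := by linarith
  set γ := Real.sqrt (1 - ((1+lam)⁻¹)^2) with hγdef
  have hinvpos : 0 < (1+lam)⁻¹ := inv_pos.mpr hlam1
  have hinv1 : (1+lam)⁻¹ ≤ 1 := by
    nlinarith [mul_inv_cancel₀ hlam1.ne']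
  have hx0 : (0:ℝ) ≤ 1 - ((1+lam)⁻¹)^2 := by nlinarith
  have hγ2 : γ^2 = 1 - ((1+lam)⁻¹)^2 := Real.sq_sqrt hx0
  have hγ0 : 0 ≤ γ := Real.sqrt_nonneg _
  have hγ1 : γ < 1 := by nlinarith
  have hαγ : α * γ < 1 := by nlinarith
  have hden : 0 < 1 - α * γ := by linarith
  refine ⟨C * (1+lam) * α * (1 - α*γ)⁻¹ + 1, ?_, ?_⟩
  · have : 0 < C * (1+lam) * α * (1 - α*γ)⁻¹ :=
      mul_pos (mul_pos (mul_pos hC hlam1) hα0) (inv_pos.mpr hden)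
    linarith
  intro lams lams' hmem hmem' hclose w0 w0' hw hw'
  have P := orbit_props lam lams hmem w0 hw
  have P' := orbit_props lam lams' hmem' w0' hw'
  set t : ℕ → ℝ := fun k => ‖orbit lams w0 k‖ with ht_def
  set t' : ℕ → ℝ := fun k => ‖orbit lams' w0' k‖ with ht'_def
  set s : ℕ → ℝ := fun k => ‖1 + orbit lams w0 k‖ with hs_def
  set s' : ℕ → ℝ := fun k => ‖1 + orbit lams' w0' k‖ with hs'_def
  -- basic facts
  have hspos : ∀ k, 0 < s k := fun k => (P k).1
  have hspos' : ∀ k, 0 < s' k := fun k => (P' k).1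
  have htlow : ∀ k, 1 < t k := fun k => (P k).2.1
  have htlow' : ∀ k, 1 < t' k := fun k => (P' k).2.1
  have htup : ∀ k, t k ≤ 1 + lam := fun k => (P k).2.2.1
  have htup' : ∀ k, t' k ≤ 1 + lam := fun k => (P' k).2.2.1
  have hts : ∀ k, t (k+1) * s k = lams (k+1) := fun k => (P k).2.2.2.1
  have hts' : ∀ k, t' (k+1) * s' k = lams' (k+1) := fun k => (P' k).2.2.2.1
  have hsqr : ∀ k, s k ^ 2 + 1 ≤ t k ^ 2 := fun k => (P k).2.2.2.2
  have hsqr' : ∀ k, s' k ^ 2 + 1 ≤ t' k ^ 2 := fun k => (P' k).2.2.2.2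
  -- s ≤ γ t
  have hsγ : ∀ k, s k ≤ γ * t k := by
    intro k
    have h1 : s k^2 ≤ (γ * t k)^2 := by
      have e1 : (γ * t k)^2 = t k^2 - t k^2 * ((1+lam)⁻¹)^2 := by
        rw [mul_pow, hγ2]; ring
      have h4 : t k * (1+lam)⁻¹ ≤ 1 := by
        have h5 := mul_le_mul_of_nonneg_right (htup k) hinvpos.le
        rw [mul_inv_cancel₀ hlam1.ne'] at h5
        exact h5
      have h6 : 0 ≤ t k * (1+lam)⁻¹ := by positivity
      nlinarith [hsqr k]
    calc s k = Real.sqrt (s k^2) := (Real.sqrt_sq (hspos k).le).symm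
      _ ≤ Real.sqrt ((γ * t k)^2) := Real.sqrt_le_sqrt h1
      _ = γ * t k := Real.sqrt_sq (mul_nonneg hγ0 (by linarith [htlow k]))
  have hsγ' : ∀ k, s' k ≤ γ * t' k := by
    intro k
    have h1 : s' k^2 ≤ (γ * t' k)^2 := by
      have e1 : (γ * t' k)^2 = t' k^2 - t' k^2 * ((1+lam)⁻¹)^2 := by
        rw [mul_pow, hγ2]; ring
      have h4 : t' k * (1+lam)⁻¹ ≤ 1 := by
        have h5 := mul_le_mul_of_nonneg_right (htup' k) hinvpos.le
        rw [mul_inv_cancel₀ hlam1.ne'] at h5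
        exact h5
      have h6 : 0 ≤ t' k * (1+lam)⁻¹ := by positivity
      nlinarith [hsqr' k]
    calc s' k = Real.sqrt (s' k^2) := (Real.sqrt_sq (hspos' k).le).symm
      _ ≤ Real.sqrt ((γ * t' k)^2) := Real.sqrt_le_sqrt h1
      _ = γ * t' k := Real.sqrt_sq (mul_nonneg hγ0 (by linarith [htlow' k]))
  -- the contraction coefficients
  set g : ℕ → ℝ := fun k => Real.sqrt (lams (k+1) * lams' (k+1)) / (t (k+1) * t' (k+1))
    with hg_def
  have hg0 : ∀ k, 0 ≤ g k := by
    intro k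
    have := Real.sqrt_nonneg (lams (k+1) * lams' (k+1))
    have h1 : 0 < t (k+1) * t' (k+1) := mul_pos (by linarith [htlow (k+1)]) (by linarith [htlow' (k+1)])
    positivity
  -- rearranged orbit relation
  have hrearr : ∀ k, orbit lams w0 k = (lams (k+1) : ℂ) / orbit lams w0 (k+1) - 1 := by
    intro k
    have horb : orbit lams w0 (k+1) = (lams (k+1) : ℂ) / (1 + orbit lams w0 k) := rfl
    have hne : (1 + orbit lams w0 k) ≠ 0 := norm_pos_iff.mp (hspos k)
    have haC : (lams (k+1) : ℂ) ≠ 0 := Complex.ofReal_ne_zero.mpr (hmem (k+1) (by omega)).1.ne'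
    rw [horb, div_div_eq_mul_div, mul_comm, mul_div_assoc, div_self haC, mul_one]
    ring
  have hrearr' : ∀ k, orbit lams' w0' k = (lams' (k+1) : ℂ) / orbit lams' w0' (k+1) - 1 := by
    intro k
    have horb : orbit lams' w0' (k+1) = (lams' (k+1) : ℂ) / (1 + orbit lams' w0' k) := rfl
    have hne : (1 + orbit lams' w0' k) ≠ 0 := norm_pos_iff.mp (hspos' k)
    have haC : (lams' (k+1) : ℂ) ≠ 0 := Complex.ofReal_ne_zero.mpr (hmem' (k+1) (by omega)).1.ne'
    rw [horb, div_div_eq_mul_div, mul_comm, mul_div_assoc, div_self haC, mul_one]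
    ring
  -- one-step inequality
  have hstep : ∀ k, ‖orbit lams w0 k - orbit lams' w0' k‖ ≤
      C * α^(k+1) + g k * ‖orbit lams w0 (k+1) - orbit lams' w0' (k+1)‖ := by
    intro k
    have h := step_bound (lams (k+1)) (lams' (k+1)) (orbit lams w0 (k+1))
      (orbit lams' w0' (k+1)) (orbit lams w0 k) (orbit lams' w0' k)
      (hmem (k+1) (by omega)).1 (hmem' (k+1) (by omega)).1
      (htlow (k+1)).le (htlow' (k+1)).le (hrearr k) (hrearr' k)
    have hcl := hclose (k+1) (by omega)
    calc ‖orbit lams w0 k - orbit lams' w0' k‖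
        ≤ |lams (k+1) - lams' (k+1)| +
          Real.sqrt (lams (k+1) * lams' (k+1)) / (t (k+1) * t' (k+1)) *
            ‖orbit lams w0 (k+1) - orbit lams' w0' (k+1)‖ := h
      _ ≤ C * α^(k+1) + g k * ‖orbit lams w0 (k+1) - orbit lams' w0' (k+1)‖ := by
          rw [hg_def]
          exact add_le_add hcl.le le_rfl
  -- uniform bound on differences
  have hBnd : ∀ k, ‖orbit lams w0 k - orbit lams' w0' k‖ ≤ 2*(1+lam) := by
    intro k
    calc ‖orbit lams w0 k - orbit lams' w0' k‖ ≤ t k + t' k := norm_sub_le _ _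
      _ ≤ 2*(1+lam) := by linarith [htup k, htup' k]
  -- unrolled inequality
  have hind : ∀ m j, ‖orbit lams w0 m - orbit lams' w0' m‖ ≤
      C * (∑ i ∈ Finset.range j, (∏ l ∈ Finset.range i, g (m+l)) * α^(m+i+1))
      + (∏ l ∈ Finset.range j, g (m+l)) * ‖orbit lams w0 (m+j) - orbit lams' w0' (m+j)‖ := by
    intro m j
    induction j with
    | zero => simp
    | succ j ih =>
      have hPP : 0 ≤ ∏ l ∈ Finset.range j, g (m+l) := Finset.prod_nonneg (fun l _ => hg0 _)
      simp only [Nat.add_succ]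
      calc ‖orbit lams w0 m - orbit lams' w0' m‖
          ≤ C * (∑ i ∈ Finset.range j, (∏ l ∈ Finset.range i, g (m+l)) * α^(m+i+1))
            + (∏ l ∈ Finset.range j, g (m+l)) *
              ‖orbit lams w0 (m+j) - orbit lams' w0' (m+j)‖ := ih
        _ ≤ C * (∑ i ∈ Finset.range j, (∏ l ∈ Finset.range i, g (m+l)) * α^(m+i+1))
            + (∏ l ∈ Finset.range j, g (m+l)) *
              (C * α^(m+j+1) + g (m+j) * ‖orbit lams w0 (m+j+1) - orbit lams' w0' (m+j+1)‖) :=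
            add_le_add le_rfl (mul_le_mul_of_nonneg_left (hstep (m+j)) hPP)
        _ = C * (∑ i ∈ Finset.range (j+1), (∏ l ∈ Finset.range i, g (m+l)) * α^(m+i+1))
            + (∏ l ∈ Finset.range (j+1), g (m+l)) *
              ‖orbit lams w0 (m+j+1) - orbit lams' w0' (m+j+1)‖ := by
            rw [Finset.sum_range_succ, Finset.prod_range_succ]; ring
  -- product bound for a single orbit
  have hAprod : ∀ (ss tt : ℕ → ℝ), (∀ k, 0 < ss k) → (∀ k, 1 < tt k) → (∀ k, tt k ≤ 1 + lam) →
      (∀ k, ss k ≤ γ * tt k) →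
      ∀ m i, (∏ l ∈ Finset.range i, ss (m+l) / tt (m+l+1)) * tt (m+i) ≤ γ^i * tt m := by
    intro ss tt hss htt httup hstγ m i
    induction i with
    | zero => simp
    | succ i ih =>
      have hPP : 0 ≤ ∏ l ∈ Finset.range i, ss (m+l) / tt (m+l+1) :=
        Finset.prod_nonneg (fun l _ => div_nonneg (hss _).le (by linarith [htt (m+l+1)]))
      have htpos : (0:ℝ) < tt (m+i+1) := by linarith [htt (m+i+1)]
      simp only [Nat.add_succ]
      rw [Finset.prod_range_succ]
      calc (∏ l ∈ Finset.range i, ss (m+l) / tt (m+l+1)) * (ss (m+i) / tt (m+i+1)) * tt (m+i+1)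
          = (∏ l ∈ Finset.range i, ss (m+l) / tt (m+l+1)) * ss (m+i) := by
            rw [mul_assoc, div_mul_cancel₀ _ htpos.ne']
        _ ≤ (∏ l ∈ Finset.range i, ss (m+l) / tt (m+l+1)) * (γ * tt (m+i)) :=
            mul_le_mul_of_nonneg_left (hstγ (m+i)) hPP
        _ = γ * ((∏ l ∈ Finset.range i, ss (m+l) / tt (m+l+1)) * tt (m+i)) := by ring
        _ ≤ γ * (γ^i * tt m) := mul_le_mul_of_nonneg_left ih hγ0
        _ = γ^(i+1) * tt m := by ring
  have hA : ∀ (ss tt : ℕ → ℝ), (∀ k, 0 < ss k) → (∀ k, 1 < tt k) → (∀ k, tt k ≤ 1 + lam) →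
      (∀ k, ss k ≤ γ * tt k) →
      ∀ m i, (∏ l ∈ Finset.range i, ss (m+l) / tt (m+l+1)) ≤ γ^i * (1 + lam) := by
    intro ss tt hss htt httup hstγ m i
    have hPP : 0 ≤ ∏ l ∈ Finset.range i, ss (m+l) / tt (m+l+1) :=
      Finset.prod_nonneg (fun l _ => div_nonneg (hss _).le (by linarith [htt (m+l+1)]))
    calc (∏ l ∈ Finset.range i, ss (m+l) / tt (m+l+1))
        ≤ (∏ l ∈ Finset.range i, ss (m+l) / tt (m+l+1)) * tt (m+i) :=
          le_mul_of_one_le_right hPP (htt (m+i)).le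
      _ ≤ γ^i * tt m := hAprod ss tt hss htt httup hstγ m i
      _ ≤ γ^i * (1 + lam) := mul_le_mul_of_nonneg_left (httup m) (pow_nonneg hγ0 i)
  -- bound on products of g
  have hgprod : ∀ m i, (∏ l ∈ Finset.range i, g (m+l)) ≤ (1+lam) * γ^i := by
    intro m i
    have hPP0 : 0 ≤ ∏ l ∈ Finset.range i, g (m+l) := Finset.prod_nonneg (fun l _ => hg0 _)
    have hsq : (∏ l ∈ Finset.range i, g (m+l))^2
        = (∏ l ∈ Finset.range i, s (m+l) / t (m+l+1)) *
          (∏ l ∈ Finset.range i, s' (m+l) / t' (m+l+1)) := by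
      rw [← Finset.prod_mul_distrib, ← Finset.prod_pow]
      apply Finset.prod_congr rfl
      intro l _
      have h1 : 0 ≤ lams (m+l+1) * lams' (m+l+1) :=
        mul_nonneg (hmem (m+l+1) (by omega)).1.le (hmem' (m+l+1) (by omega)).1.le
      have h2 : lams (m+l+1) * lams' (m+l+1)
          = (t (m+l+1) * s (m+l)) * (t' (m+l+1) * s' (m+l)) := by
        rw [hts, hts']
      have ht1 : t (m+l+1) ≠ 0 := by have := htlow (m+l+1); positivity
      have ht2 : t' (m+l+1) ≠ 0 := by have := htlow' (m+l+1); positivity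
      rw [hg_def]
      show (Real.sqrt (lams (m+l+1) * lams' (m+l+1)) / (t (m+l+1) * t' (m+l+1)))^2
        = s (m+l) / t (m+l+1) * (s' (m+l) / t' (m+l+1))
      rw [div_pow, Real.sq_sqrt h1, h2]
      field_simp
    have h2 : (∏ l ∈ Finset.range i, g (m+l))^2 ≤ ((1+lam) * γ^i)^2 := by
      rw [hsq]
      have hA1 := hA s t hspos htlow htup hsγ m i
      have hA2 := hA s' t' hspos' htlow' htup' hsγ' m i
      have hPP2 : 0 ≤ ∏ l ∈ Finset.range i, s' (m+l) / t' (m+l+1) :=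
        Finset.prod_nonneg (fun l _ => div_nonneg (hspos' _).le (by linarith [htlow' (m+l+1)]))
      calc (∏ l ∈ Finset.range i, s (m+l) / t (m+l+1)) *
            (∏ l ∈ Finset.range i, s' (m+l) / t' (m+l+1))
          ≤ (γ^i * (1+lam)) * (γ^i * (1+lam)) := by
            apply mul_le_mul hA1 hA2 hPP2 (by positivity)
        _ = ((1+lam) * γ^i)^2 := by ring
    calc (∏ l ∈ Finset.range i, g (m+l)) = Real.sqrt ((∏ l ∈ Finset.range i, g (m+l))^2) :=
          (Real.sqrt_sq hPP0).symm
      _ ≤ Real.sqrt (((1+lam) * γ^i)^2) := Real.sqrt_le_sqrt h2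
      _ = (1+lam) * γ^i := Real.sqrt_sq (by positivity)
  -- final assembly
  intro n
  have hαn : (0:ℝ) < α^n := pow_pos hα0 n
  have key : ∀ ε, 0 < ε →
      ‖orbit lams w0 n - orbit lams' w0' n‖ ≤ C * (1+lam) * α * (1 - α*γ)⁻¹ * α^n + ε := by
    intro ε hε
    obtain ⟨j, hj⟩ := exists_pow_lt_of_lt_one
      (show (0:ℝ) < ε / ((1+lam) * (2*(1+lam))) by positivity) hγ1
    have main := hind n j
    have hexp : ∀ i : ℕ, n+i+1 = (n+1)+i := by omega
    have hsum : ∑ i ∈ Finset.range j, (∏ l ∈ Finset.range i, g (n+l)) * α^(n+i+1)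
        ≤ (1+lam) * α^(n+1) * (1 - α*γ)⁻¹ := by
      calc ∑ i ∈ Finset.range j, (∏ l ∈ Finset.range i, g (n+l)) * α^(n+i+1)
          ≤ ∑ i ∈ Finset.range j, ((1+lam) * γ^i) * α^(n+i+1) :=
            Finset.sum_le_sum (fun i _ =>
              mul_le_mul_of_nonneg_right (hgprod n i) (pow_nonneg hα0.le _))
        _ = (1+lam) * α^(n+1) * ∑ i ∈ Finset.range j, (α*γ)^i := by
            rw [Finset.mul_sum]
            apply Finset.sum_congr rfl
            intro i _
            rw [hexp i, pow_add, mul_pow]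
            ring
        _ ≤ (1+lam) * α^(n+1) * (1-α*γ)⁻¹ := by
            apply mul_le_mul_of_nonneg_left (geom_bound _ (by positivity) hαγ j) (by positivity)
    have htail : (∏ l ∈ Finset.range j, g (n+l)) *
        ‖orbit lams w0 (n+j) - orbit lams' w0' (n+j)‖ ≤ ε := by
      have hPP0 : 0 ≤ ∏ l ∈ Finset.range j, g (n+l) := Finset.prod_nonneg (fun l _ => hg0 _)
      calc (∏ l ∈ Finset.range j, g (n+l)) *
            ‖orbit lams w0 (n+j) - orbit lams' w0' (n+j)‖
          ≤ ((1+lam) * γ^j) * (2*(1+lam)) :=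
            mul_le_mul (hgprod n j) (hBnd (n+j)) (norm_nonneg _) (by positivity)
        _ = γ^j * ((1+lam)*(2*(1+lam))) := by ring
        _ ≤ (ε / ((1+lam)*(2*(1+lam)))) * ((1+lam)*(2*(1+lam))) :=
            mul_le_mul_of_nonneg_right hj.le (by positivity)
        _ = ε := div_mul_cancel₀ _ (by positivity)
    calc ‖orbit lams w0 n - orbit lams' w0' n‖
        ≤ C * (∑ i ∈ Finset.range j, (∏ l ∈ Finset.range i, g (n+l)) * α^(n+i+1))
          + (∏ l ∈ Finset.range j, g (n+l)) *
            ‖orbit lams w0 (n+j) - orbit lams' w0' (n+j)‖ := main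
      _ ≤ C * ((1+lam) * α^(n+1) * (1-α*γ)⁻¹) + ε :=
          add_le_add (mul_le_mul_of_nonneg_left hsum hC.le) htail
      _ = C * (1+lam) * α * (1 - α*γ)⁻¹ * α^n + ε := by
          rw [pow_succ]; ring
  have hfin : ‖orbit lams w0 n - orbit lams' w0' n‖ ≤ C * (1+lam) * α * (1 - α*γ)⁻¹ * α^n :=
    le_of_forall_pos_le_add key
  calc ‖orbit lams w0 n - orbit lams' w0' n‖ ≤ C * (1+lam) * α * (1 - α*γ)⁻¹ * α^n := hfin
    _ ≤ (C * (1+lam) * α * (1 - α*γ)⁻¹ + 1) * α^n := by nlinarith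

end
end

section
/- Let Δ ∈ ℕ and λ > 0. Let K ⊂ B_{λ/2}(λ/2) be a compact set containing a neighbourhood of the interval [ℓ_Δ(λ), r_Δ(λ)]. Then there exists a constant C > 0 such that for every sequence (λ_n) in [ℓ_Δ(λ), λ], every n ∈ ℕ, and the maps F_n = f_{λ_n} ∘ ⋯ ∘ f_{λ_1}, we have ‖F_n'‖_K ≤ C·|F_n(0) − F_n(λ)|. -/
noncomputable section

/-- `ℓ_Δ(λ) = λ/(1+λ)^{Δ−1}`. -/
def ellD (Δ : ℕ) (lam : ℝ) : ℝ := lam / (1 + lam) ^ (Δ - 1)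

/-- `r_Δ(λ) = λ/(1+ℓ_Δ(λ))`. -/
def rD (Δ : ℕ) (lam : ℝ) : ℝ := lam / (1 + ellD Δ lam)

/-- The Möbius transformation `f_a(z) = a/(1+z)`. -/
def fmob (a : ℝ) (z : ℂ) : ℂ := (a : ℂ) / (1 + z)

/-- The composition `F_n = f_{λ_n} ∘ ⋯ ∘ f_{λ_1}`. -/
def compMob (lams : ℕ → ℝ) : ℕ → ℂ → ℂ
  | 0, z => z
  | k + 1, z => fmob (lams (k + 1)) (compMob lams k z)

/-- Coefficients `(a, b, c, d)` of a Möbius representation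
`z ↦ (a z + b)/(c z + d)` of `compMob lams n`. -/
def coefM (lams : ℕ → ℝ) : ℕ → ℝ × ℝ × ℝ × ℝ
  | 0 => (1, 0, 0, 1)
  | k + 1 =>
      (lams (k+1) * (coefM lams k).2.2.1, lams (k+1) * (coefM lams k).2.2.2,
       (coefM lams k).1 + (coefM lams k).2.2.1, (coefM lams k).2.1 + (coefM lams k).2.2.2)

lemma coefM_inv (lams : ℕ → ℝ) (hpos : ∀ k, 1 ≤ k → 0 < lams k) (n : ℕ) :
    0 ≤ (coefM lams n).1 ∧ 0 ≤ (coefM lams n).2.1 ∧ 0 ≤ (coefM lams n).2.2.1 ∧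
      0 < (coefM lams n).2.2.2 ∧ 0 < (coefM lams n).1 + (coefM lams n).2.2.1 ∧
      (coefM lams n).1 * (coefM lams n).2.2.2 - (coefM lams n).2.1 * (coefM lams n).2.2.1 ≠ 0 := by
  induction n with
  | zero => norm_num [coefM]
  | succ k ih =>
    obtain ⟨ha, hb, hc, hd, hac, he⟩ := ih
    have hl : 0 < lams (k+1) := hpos _ (by omega)
    set a := (coefM lams k).1
    set b := (coefM lams k).2.1
    set c := (coefM lams k).2.2.1
    set d := (coefM lams k).2.2.2
    simp only [coefM]
    refine ⟨mul_nonneg hl.le hc, mul_nonneg hl.le hd.le, hac.le,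
      by linarith, by nlinarith, ?_⟩
    have h1 : lams (k+1) * c * (b + d) - lams (k+1) * d * (a + c)
        = -(lams (k+1)) * (a * d - b * c) := by ring
    rw [h1]
    exact mul_ne_zero (by linarith) he

lemma re_ne_zero' {w : ℂ} (h : 0 < w.re) : w ≠ 0 := by
  intro h0; rw [h0] at h; simp at h

lemma coefM_repr (lams : ℕ → ℝ) (hpos : ∀ k, 1 ≤ k → 0 < lams k) (n : ℕ) (z : ℂ)
    (hz : 0 ≤ z.re) :
    compMob lams n z =
      (((coefM lams n).1 : ℂ) * z + ((coefM lams n).2.1 : ℂ)) /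
        (((coefM lams n).2.2.1 : ℂ) * z + ((coefM lams n).2.2.2 : ℂ)) := by
  induction n with
  | zero => simp [compMob, coefM]
  | succ k ih =>
    obtain ⟨ha, hb, hc, hd, hac, he⟩ := coefM_inv lams hpos k
    set a := (coefM lams k).1
    set b := (coefM lams k).2.1
    set c := (coefM lams k).2.2.1
    set d := (coefM lams k).2.2.2
    have hre1 : (0:ℝ) < ((c:ℂ) * z + (d:ℂ)).re := by
      simp only [Complex.add_re, Complex.mul_re, Complex.ofReal_re, Complex.ofReal_im]
      nlinarith [mul_nonneg hc hz]
    have hden : (c:ℂ) * z + (d:ℂ) ≠ 0 := re_ne_zero' hre1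
    have hre2 : (0:ℝ) < ((a:ℂ) * z + (b:ℂ) + ((c:ℂ) * z + (d:ℂ))).re := by
      simp only [Complex.add_re, Complex.mul_re, Complex.ofReal_re, Complex.ofReal_im]
      nlinarith [mul_nonneg ha hz, mul_nonneg hc hz]
    have hden2 : (a:ℂ) * z + (b:ℂ) + ((c:ℂ) * z + (d:ℂ)) ≠ 0 := re_ne_zero' hre2
    show fmob (lams (k+1)) (compMob lams k z) = _
    rw [ih, fmob]
    simp only [coefM]
    push_cast
    rw [div_eq_div_iff (by rw [one_add_div hden]; exact div_ne_zero (by intro h; exact hden2 (by linear_combination h)) hden)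
      (by intro h; exact hden2 (by linear_combination h))]
    rw [one_add_div hden, mul_div_assoc', eq_div_iff hden]
    ring

lemma compMob_deriv (lams : ℕ → ℝ) (hpos : ∀ k, 1 ≤ k → 0 < lams k) (n : ℕ) (z : ℂ)
    (hz : 0 < z.re) :
    deriv (compMob lams n) z =
      (((coefM lams n).1 * (coefM lams n).2.2.2
          - (coefM lams n).2.1 * (coefM lams n).2.2.1 : ℝ) : ℂ)
        / (((coefM lams n).2.2.1 : ℂ) * z + ((coefM lams n).2.2.2 : ℂ)) ^ 2 := by
  obtain ⟨ha, hb, hc, hd, hac, he⟩ := coefM_inv lams hpos n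
  set a := (coefM lams n).1
  set b := (coefM lams n).2.1
  set c := (coefM lams n).2.2.1
  set d := (coefM lams n).2.2.2
  have hU : IsOpen {w : ℂ | 0 < w.re} := isOpen_Ioi.preimage Complex.continuous_re
  have hev : compMob lams n =ᶠ[nhds z] fun w => ((a:ℂ) * w + (b:ℂ)) / ((c:ℂ) * w + (d:ℂ)) := by
    filter_upwards [hU.mem_nhds hz] with w hw
    exact coefM_repr lams hpos n w (le_of_lt hw)
  rw [hev.deriv_eq]
  have hre1 : (0:ℝ) < ((c:ℂ) * z + (d:ℂ)).re := by
    simp only [Complex.add_re, Complex.mul_re, Complex.ofReal_re, Complex.ofReal_im]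
    nlinarith [mul_nonneg hc hz.le]
  have hden : (c:ℂ) * z + (d:ℂ) ≠ 0 := re_ne_zero' hre1
  have h1 : HasDerivAt (fun w : ℂ => (a:ℂ) * w + (b:ℂ)) (a:ℂ) z := by
    simpa using ((hasDerivAt_id z).const_mul (a:ℂ)).add_const (b:ℂ)
  have h2 : HasDerivAt (fun w : ℂ => (c:ℂ) * w + (d:ℂ)) (c:ℂ) z := by
    simpa using ((hasDerivAt_id z).const_mul (c:ℂ)).add_const (d:ℂ)
  rw [(h1.fun_div h2 hden).deriv]
  congr 1
  push_cast
  ring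

/-- **Corollary 3.9.** Let `Δ ∈ ℕ`, `λ > 0` and let `K` be a compact subset
of the open disc `B_{λ/2}(λ/2)` containing a neighbourhood of `[ℓ_Δ(λ), r_Δ(λ)]`.  Then
there is `C > 0` such that for every sequence `(λ_n)` in `[ℓ_Δ(λ), λ]` and every `n ≥ 1`
the composition `F_n = f_{λ_n} ∘ ⋯ ∘ f_{λ_1}` satisfies
`‖F_n'‖_K ≤ C·|F_n(0) − F_n(λ)|`. -/
theorem compMob_deriv_bound (Δ : ℕ) (lam : ℝ) (hlam : 0 < lam) (K : Set ℂ)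
    (hK : IsCompact K)
    (hKD : K ⊆ Metric.ball ((lam / 2 : ℝ) : ℂ) (lam / 2))
    (hnbhd : (fun x : ℝ => (x : ℂ)) '' Set.Icc (ellD Δ lam) (rD Δ lam) ⊆ interior K) :
    ∃ C : ℝ, 0 < C ∧ ∀ lams : ℕ → ℝ,
      (∀ n : ℕ, 1 ≤ n → lams n ∈ Set.Icc (ellD Δ lam) lam) →
      ∀ n : ℕ, 1 ≤ n → ∀ z ∈ K,
        ‖deriv (compMob lams n) z‖ ≤
          C * ‖compMob lams n 0 - compMob lams n ((lam : ℝ) : ℂ)‖ := by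
  rcases Set.eq_empty_or_nonempty K with hKe | hne
  · exact ⟨1, one_pos, by simp [hKe]⟩
  have hzre : ∀ z ∈ K, 0 < z.re := by
    intro z hz
    have h := hKD hz
    rw [Metric.mem_ball, Complex.dist_eq] at h
    have h2 : ‖z - ((lam/2 : ℝ) : ℂ)‖ ^ 2 < (lam/2) ^ 2 := by
      have := norm_nonneg (z - ((lam/2 : ℝ) : ℂ))
      nlinarith
    rw [Complex.sq_norm, Complex.normSq_apply] at h2
    simp only [Complex.sub_re, Complex.sub_im, Complex.ofReal_re, Complex.ofReal_im] at h2
    nlinarith [sq_nonneg z.im]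
  obtain ⟨z₀, hz₀K, hmin'⟩ := hK.exists_isMinOn hne continuous_norm.continuousOn
  have hmin : ∀ z ∈ K, ‖z₀‖ ≤ ‖z‖ := fun z hz => hmin' hz
  set δ := ‖z₀‖ with hδdef
  have hδ : 0 < δ := by
    have h0 : 0 < z₀.re := hzre z₀ hz₀K
    exact norm_pos_iff.mpr (re_ne_zero' h0)
  refine ⟨(lam + 2*δ)/(2*δ*lam), by positivity, ?_⟩
  intro lams hlams n hn z hzK
  have hell : 0 < ellD Δ lam := by
    unfold ellD; positivity
  have hpos : ∀ k, 1 ≤ k → 0 < lams k := fun k hk => lt_of_lt_of_le hell (hlams k hk).1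
  obtain ⟨ha, hb, hc, hd, hac, he⟩ := coefM_inv lams hpos n
  set a := (coefM lams n).1
  set b := (coefM lams n).2.1
  set c := (coefM lams n).2.2.1
  set d := (coefM lams n).2.2.2
  have hx : 0 < z.re := hzre z hzK
  have hδz : δ ≤ ‖z‖ := hmin z hzK
  have hxy : δ^2 ≤ z.re^2 + z.im^2 := by
    have h1 : δ^2 ≤ ‖z‖^2 := pow_le_pow_left₀ hδ.le hδz 2
    have h2 : ‖z‖^2 = z.re^2 + z.im^2 := by
      rw [Complex.sq_norm, Complex.normSq_apply]; ring
    linarith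
  have hcd : 0 < c * lam + d := by nlinarith [mul_nonneg hc hlam.le]
  have hd' : (d:ℂ) ≠ 0 := Complex.ofReal_ne_zero.mpr hd.ne'
  have hcd' : (c:ℂ) * (lam:ℂ) + (d:ℂ) ≠ 0 := by
    intro h
    have h2 : ((c * lam + d : ℝ) : ℂ) = 0 := by push_cast; linear_combination h
    exact hcd.ne' (by exact_mod_cast h2)
  rw [compMob_deriv lams hpos n z hx,
    coefM_repr lams hpos n 0 (by simp),
    coefM_repr lams hpos n ((lam : ℝ) : ℂ) (by simp [hlam.le])]
  have hdiff : ((a:ℂ) * 0 + (b:ℂ)) / ((c:ℂ) * 0 + (d:ℂ))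
      - ((a:ℂ) * (lam:ℂ) + (b:ℂ)) / ((c:ℂ) * (lam:ℂ) + (d:ℂ))
      = ((lam * (b*c - a*d) / (d * (c*lam + d)) : ℝ) : ℂ) := by
    push_cast
    field_simp [hd']
    ring
  rw [hdiff]
  have hnorm1 : ‖((a*d - b*c : ℝ) : ℂ) / ((c:ℂ) * z + (d:ℂ)) ^ 2‖
      = |a*d - b*c| / ((c*z.re + d)^2 + (c*z.im)^2) := by
    rw [norm_div, norm_pow, Complex.norm_real, Real.norm_eq_abs]
    congr 1
    rw [Complex.sq_norm, Complex.normSq_apply]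
    simp only [Complex.add_re, Complex.add_im, Complex.mul_re, Complex.mul_im,
      Complex.ofReal_re, Complex.ofReal_im]
    ring
  rw [hnorm1, Complex.norm_real, Real.norm_eq_abs]
  have habs2 : |lam * (b*c - a*d) / (d * (c*lam + d))|
      = lam * |a*d - b*c| / (d * (c*lam + d)) := by
    rw [abs_div, abs_mul, abs_of_pos hlam, abs_of_pos (mul_pos hd hcd), abs_sub_comm]
  rw [habs2]
  set x := z.re
  set y := z.im
  set e := |a*d - b*c| with hedef
  have he' : 0 < e := abs_pos.mpr he
  set S := (c*x + d)^2 + (c*y)^2 with hSdef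
  have hS : 0 < S := by nlinarith [mul_nonneg hc hx.le, sq_nonneg (c*y)]
  have key : 2*δ*(d*(c*lam+d)) ≤ (lam + 2*δ) * S := by
    nlinarith [sq_nonneg (c*δ - d), mul_nonneg (mul_nonneg hlam.le (mul_nonneg hc hc))
      (sub_nonneg.mpr hxy), mul_nonneg hc hx.le, sq_nonneg (c*y), mul_pos hδ hd,
      mul_nonneg (mul_nonneg hδ.le hc) hx.le, mul_nonneg hlam.le (mul_nonneg (mul_nonneg hc hx.le) hd.le)]
  have hrw : (lam + 2*δ)/(2*δ*lam) * (lam * e / (d*(c*lam+d)))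
      = ((lam + 2*δ) * S) * e / ((2*δ) * (d*(c*lam+d)) * S) := by
    field_simp
  have hden3 : 0 < (2*δ) * (d*(c*lam+d)) * S :=
    mul_pos (mul_pos (by linarith) (mul_pos hd hcd)) hS
  rw [hrw, div_le_div_iff₀ hS hden3]
  calc e * ((2*δ) * (d*(c*lam+d)) * S) = (2*δ*(d*(c*lam+d))) * (e * S) := by ring
    _ ≤ ((lam + 2*δ) * S) * (e * S) := by
        apply mul_le_mul_of_nonneg_right key (mul_nonneg he'.le hS.le)
    _ = (lam + 2*δ) * S * e * S := by ring

end
end
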